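/- arXiv:2211.06237 — 11 statements merged into one kernel-verified Lean document; each statement's English description precedes it below -/
import Mathlib

section
/- Let P, P₀ ∈ ℝ^{n×n} be symmetric positive definite and c, c₀ ∈ ℝⁿ. If E(c,P) ⊆ E(c₀,P₀), then P − P₀ is positive semidefinite, i.e., vᵀ P v ≥ vᵀ P₀ v for all v ∈ ℝⁿ. -/
open Matrix

noncomputable section

/-- The ellipsoid with center `c` and shape matrix `P`. -/
def Ellipsoid {n : ℕ} (c : Fin n → ℝ) (P : Matrix (Fin n) (Fin n) ℝ) : Set (Fin n → ℝ) :=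
  {x | (x - c) ⬝ᵥ P.mulVec (x - c) ≤ 1}

theorem stmt_2 {n : ℕ} (P P₀ : Matrix (Fin n) (Fin n) ℝ) (c c₀ : Fin n → ℝ)
    (hP : P.PosDef) (hP₀ : P₀.PosDef)
    (h : Ellipsoid c P ⊆ Ellipsoid c₀ P₀) :
    (P - P₀).PosSemidef ∧ ∀ v : Fin n → ℝ, v ⬝ᵥ P₀.mulVec v ≤ v ⬝ᵥ P.mulVec v := by
  have key : ∀ v : Fin n → ℝ, v ⬝ᵥ P₀.mulVec v ≤ v ⬝ᵥ P.mulVec v := by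
    intro v
    by_cases hv : v = 0
    · simp [hv]
    · set q := v ⬝ᵥ P.mulVec v with hqdef
      have hq : 0 < q := by
        have := (posDef_iff_dotProduct_mulVec.mp hP).2 hv
        simpa [hqdef] using this
      set t := (Real.sqrt q)⁻¹ with htdef
      have ht : 0 < t := by positivity
      have ht2 : t ^ 2 * q = 1 := by
        rw [htdef, ← Real.sqrt_inv, Real.sq_sqrt (by positivity : (0:ℝ) ≤ q⁻¹)]
        field_simp
      have hmem : ∀ s : ℝ, s = t ∨ s = -t → c + s • v ∈ Ellipsoid c P := by
        intro s hs
        have hs2 : s ^ 2 = t ^ 2 := by rcases hs with rfl | rfl <;> ring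
        simp only [Ellipsoid, Set.mem_setOf_eq, add_sub_cancel_left]
        rw [mulVec_smul, dotProduct_smul, smul_dotProduct, smul_eq_mul, smul_eq_mul,
          ← mul_assoc, ← sq, hs2, ← hqdef, ht2]
      have h1 := h (hmem t (Or.inl rfl))
      have h2 := h (hmem (-t) (Or.inr rfl))
      simp only [Ellipsoid, Set.mem_setOf_eq] at h1 h2
      set d := c - c₀ with hddef
      have e1 : c + t • v - c₀ = d + t • v := by rw [hddef]; abel
      have e2 : c + (-t) • v - c₀ = d - t • v := by rw [hddef]; module
      rw [e1] at h1
      rw [e2] at h2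
      have expand : (d + t • v) ⬝ᵥ P₀.mulVec (d + t • v)
          + (d - t • v) ⬝ᵥ P₀.mulVec (d - t • v)
          = 2 * (d ⬝ᵥ P₀.mulVec d) + 2 * (t ^ 2 * (v ⬝ᵥ P₀.mulVec v)) := by
        simp only [mulVec_add, mulVec_sub, mulVec_smul, dotProduct_add, dotProduct_sub,
          add_dotProduct, sub_dotProduct, smul_dotProduct, dotProduct_smul, smul_eq_mul]
        ring
      have hd0 : 0 ≤ d ⬝ᵥ P₀.mulVec d := by
        have := (posSemidef_iff_dotProduct_mulVec.mp hP₀.posSemidef).2 d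
        simpa using this
      have hsum : 2 * (t ^ 2 * (v ⬝ᵥ P₀.mulVec v)) ≤ 2 := by
        nlinarith [h1, h2, expand, hd0]
      have : t ^ 2 * (v ⬝ᵥ P₀.mulVec v) ≤ t ^ 2 * q := by
        rw [ht2]; linarith
      exact le_of_mul_le_mul_left this (by positivity)
  refine ⟨posSemidef_iff_dotProduct_mulVec.mpr ⟨?_, ?_⟩, key⟩
  · exact (hP.1.sub hP₀.1)
  · intro x
    have := key x
    simp only [sub_mulVec, dotProduct_sub]
    simpa using this
end
end

section
/- Let n ≥ 1, let λ : Fin n → ℝ satisfy λᵢ > 0 for all i, let c̄ : Fin n → ℝ, and let S := {i : c̄ᵢ ≠ 0}. Define f(β) := −β − Σ_{i ∈ S} c̄ᵢ² λᵢ β/(λᵢ β − 1), let λ_min := min_i λᵢ, and let I := (1/λ_min, ∞) if there exists i ∈ S with λᵢ = λ_min, and I := [1/λ_min, ∞) otherwise. Then f is concave on I. -/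
open Matrix

noncomputable section

/-- The minimum of the eigenvalues `λ i`, for `n ≥ 1`. -/
def lamMin {n : ℕ} (hn : 1 ≤ n) (lam : Fin n → ℝ) : ℝ :=
  Finset.univ.inf' ⟨⟨0, hn⟩, Finset.mem_univ _⟩ lam

open Classical in
/-- The dual function `ℓ_{c,P}(β) = −β − Σ_{i ∈ S(c̄)} c̄ᵢ² λᵢβ/(λᵢβ−1)`,
expressed via the eigenvalues `λ` of `P` and the coordinates `c̄` of the center
in an orthonormal eigenbasis of `P`. -/
def ellFun {n : ℕ} (lam cbar : Fin n → ℝ) (β : ℝ) : ℝ :=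
  -β - ∑ i ∈ Finset.univ.filter (fun i => cbar i ≠ 0),
    (cbar i) ^ 2 * (lam i * β / (lam i * β - 1))

open Classical in
/-- The domain `I` of the dual function: the open half-line `(1/λ_min, ∞)` if some
`i` in the support of `c̄` achieves `λ_min`, and the closed half-line `[1/λ_min, ∞)`
otherwise. -/
def ellDom {n : ℕ} (lam cbar : Fin n → ℝ) (lammin : ℝ) : Set ℝ :=
  if ∃ i, cbar i ≠ 0 ∧ lam i = lammin then Set.Ioi (1 / lammin) else Set.Ici (1 / lammin)

lemma concaveOn_finset_sum {ι : Type*} {s : Set ℝ} (t : Finset ι) {f : ι → ℝ → ℝ}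
    (hs : Convex ℝ s) (h : ∀ i ∈ t, ConcaveOn ℝ s (f i)) :
    ConcaveOn ℝ s (fun x => ∑ i ∈ t, f i x) := by
  classical
  induction t using Finset.induction_on with
  | empty => simpa using concaveOn_const 0 hs
  | insert _ _ hni ih =>
    simp only [Finset.sum_insert hni]
    exact (h _ (Finset.mem_insert_self _ _)).add (ih fun i hi => h i (Finset.mem_insert_of_mem hi))

theorem stmt_5 {n : ℕ} (hn : 1 ≤ n) (lam cbar : Fin n → ℝ) (hlam : ∀ i, 0 < lam i) :
    ConcaveOn ℝ (ellDom lam cbar (lamMin hn lam)) (ellFun lam cbar) := by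
  classical
  set m := lamMin hn lam with hm
  set D := ellDom lam cbar m with hDdef
  set S := Finset.univ.filter (fun i => cbar i ≠ 0) with hS
  have hm0 : 0 < m := by
    rw [hm, lamMin]; exact (Finset.lt_inf'_iff (H := _)).2 fun i _ => hlam i
  have hmle : ∀ i, m ≤ lam i := fun i => Finset.inf'_le lam (Finset.mem_univ i)
  -- key positivity on the domain
  have key : ∀ β ∈ D, ∀ i ∈ S, 1 < lam i * β := by
    intro β hβ i hi
    have hci : cbar i ≠ 0 := by simpa [hS] using hi
    rw [hDdef, ellDom] at hβ
    by_cases hex : ∃ j, cbar j ≠ 0 ∧ lam j = m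
    · rw [if_pos hex] at hβ
      have hβ' : 1 / m < β := hβ
      calc 1 ≤ lam i / m := (one_le_div hm0).2 (hmle i)
        _ = lam i * (1 / m) := by ring
        _ < lam i * β := by
              exact mul_lt_mul_of_pos_left hβ' (hlam i)
    · rw [if_neg hex] at hβ
      have hβ' : 1 / m ≤ β := hβ
      have hne : lam i ≠ m := fun h => hex ⟨i, hci, h⟩
      have hlt : m < lam i := lt_of_le_of_ne (hmle i) (Ne.symm hne)
      calc 1 < lam i / m := (one_lt_div hm0).2 hlt
        _ = lam i * (1 / m) := by ring
        _ ≤ lam i * β := mul_le_mul_of_nonneg_left hβ' (hlam i).le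
  have hD : Convex ℝ D := by
    rw [hDdef, ellDom]
    by_cases hex : ∃ j, cbar j ≠ 0 ∧ lam j = m
    · rw [if_pos hex]; exact convex_Ioi _
    · rw [if_neg hex]; exact convex_Ici _
  -- concave parts
  have part1 : ConcaveOn ℝ D (fun β : ℝ => -β + -(∑ i ∈ S, (cbar i) ^ 2)) := by
    have h1 : ConvexOn ℝ D (id : ℝ → ℝ) := convexOn_id hD
    have h2 := h1.neg.add_const (-(∑ i ∈ S, (cbar i) ^ 2))
    exact h2.congr (fun β _ => by simp)
  have part2 : ∀ i ∈ S, ConcaveOn ℝ D (fun β : ℝ => -((cbar i) ^ 2 * (lam i * β - 1)⁻¹)) := by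
    intro i hi
    set A : ℝ →ᵃ[ℝ] ℝ := AffineMap.lineMap (-1 : ℝ) (lam i - 1) with hA
    have hAapp : ∀ β : ℝ, A β = lam i * β - 1 := by
      intro β; simp [hA, AffineMap.lineMap_apply, smul_eq_mul]; ring
    have h1 := (convexOn_zpow (-1 : ℤ)).comp_affineMap A
    have hsub : D ⊆ A ⁻¹' (Set.Ioi 0) := by
      intro β hβ
      simp only [Set.mem_preimage, Set.mem_Ioi, hAapp]
      linarith [key β hβ i hi]
    have h2 := (h1.subset hsub hD).smul (sq_nonneg (cbar i))
    have h3 := h2.neg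
    refine h3.congr fun β hβ => ?_
    simp only [Pi.neg_apply, Function.comp_apply, smul_eq_mul, hAapp, _root_.zpow_neg_one]
  have total := part1.add (concaveOn_finset_sum S hD part2)
  refine total.congr fun β hβ => ?_
  have hterm : ∀ i ∈ S, (cbar i) ^ 2 * (lam i * β / (lam i * β - 1))
      = (cbar i) ^ 2 + (cbar i) ^ 2 * (lam i * β - 1)⁻¹ := by
    intro i hi
    have h1 : lam i * β - 1 ≠ 0 := by have := key β hβ i hi; intro h; linarith
    field_simp
    ring
  show (-β + -(∑ i ∈ S, (cbar i) ^ 2)) + ∑ i ∈ S, -((cbar i) ^ 2 * (lam i * β - 1)⁻¹)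
      = ellFun lam cbar β
  rw [ellFun, ← hS, Finset.sum_congr rfl hterm, Finset.sum_add_distrib, Finset.sum_neg_distrib]
  ring
end
end

section
/- Let n ≥ 1, let λ : Fin n → ℝ satisfy λᵢ > 0 for all i, let c̄ : Fin n → ℝ, and let S := {i : c̄ᵢ ≠ 0}. Define f(β) := −β − Σ_{i ∈ S} c̄ᵢ² λᵢ β/(λᵢ β − 1), let λ_min := min_i λᵢ, and let I := (1/λ_min, ∞) if there exists i ∈ S with λᵢ = λ_min, and I := [1/λ_min, ∞) otherwise. Then f(β) < 0 for every β ∈ I. -/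
open Matrix

noncomputable section

theorem stmt_6 {n : ℕ} (hn : 1 ≤ n) (lam cbar : Fin n → ℝ) (hlam : ∀ i, 0 < lam i) :
    ∀ β ∈ ellDom lam cbar (lamMin hn lam), ellFun lam cbar β < 0 := by
  classical
  intro β hβ
  have hmin : 0 < lamMin hn lam := by
    obtain ⟨j, -, hj⟩ := Finset.exists_mem_eq_inf' ⟨⟨0, hn⟩, Finset.mem_univ _⟩ lam
    rw [lamMin, hj]; exact hlam j
  have hβpos : 0 < β := by
    unfold ellDom at hβ
    split_ifs at hβ with h
    · exact lt_trans (by positivity) hβ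
    · exact lt_of_lt_of_le (by positivity) hβ
  have hkey : ∀ i, cbar i ≠ 0 → 1 < lam i * β := by
    intro i hi
    have hle : lamMin hn lam ≤ lam i := Finset.inf'_le _ (Finset.mem_univ i)
    have heq : (1 : ℝ) = lamMin hn lam * (1 / lamMin hn lam) := by field_simp
    unfold ellDom at hβ
    split_ifs at hβ with h
    · rw [heq]
      exact mul_lt_mul' hle hβ (by positivity) (lt_of_lt_of_le hmin hle)
    · have hne : lam i ≠ lamMin hn lam := fun he => h ⟨i, hi, he⟩
      have hlt : lamMin hn lam < lam i := lt_of_le_of_ne hle (Ne.symm hne)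
      rw [heq]
      exact mul_lt_mul hlt hβ (by positivity) (hlam i).le
  have hsum : 0 ≤ ∑ i ∈ Finset.univ.filter (fun i => cbar i ≠ 0),
      (cbar i) ^ 2 * (lam i * β / (lam i * β - 1)) := by
    apply Finset.sum_nonneg
    intro i hi
    have h1 := hkey i (Finset.mem_filter.mp hi).2
    exact mul_nonneg (sq_nonneg _) (div_nonneg (by linarith) (by linarith))
  have : ellFun lam cbar β = -β - ∑ i ∈ Finset.univ.filter (fun i => cbar i ≠ 0),
      (cbar i) ^ 2 * (lam i * β / (lam i * β - 1)) := rfl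
  rw [this]
  linarith
end
end

section
/- Let P ∈ ℝ^{n×n} be symmetric positive definite with spectral decomposition P = V D Vᵀ (V orthogonal, D = diag(λ₁,…,λₙ)), let c ∈ ℝⁿ, c̄ := Vᵀ c, and let λ_min(P) be the smallest eigenvalue of P. Then for every β > 1/λ_min(P), the infimum over x ∈ ℝⁿ of the Lagrangian L(x,β) := −xᵀx + β((x−c)ᵀ P (x−c) − 1) is attained and equals ℓ_{c,P}(β) := −β − Σ_{i : c̄ᵢ ≠ 0} c̄ᵢ² λᵢ β/(λᵢ β − 1). -/
open Matrix

noncomputable section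

theorem stmt_7 {n : ℕ} (P V D : Matrix (Fin n) (Fin n) ℝ) (lam : Fin n → ℝ)
    (c : Fin n → ℝ) (hP : P.PosDef)
    (hV : Vᵀ * V = 1) (hD : D = Matrix.diagonal lam) (hdec : P = V * D * Vᵀ)
    (lammin : ℝ) (hmin : ∀ i, lammin ≤ lam i) (hex : ∃ i, lam i = lammin)
    (β : ℝ) (hβ : 1 / lammin < β) :
    IsLeast
      (Set.range fun x : Fin n → ℝ =>
        -(x ⬝ᵥ x) + β * ((x - c) ⬝ᵥ P.mulVec (x - c) - 1))
      (ellFun lam (Vᵀ.mulVec c) β) := by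
  classical
  set cbar : Fin n → ℝ := Vᵀ.mulVec c with hcbar
  have hVV : V * Vᵀ = 1 := mul_eq_one_comm.mp hV
  -- positivity of the eigenvalues
  have hlampos : ∀ i, 0 < lam i := by
    intro i
    set v : Fin n → ℝ := V *ᵥ Pi.single i 1 with hv
    have hvv : Vᵀ *ᵥ v = Pi.single i 1 := by
      rw [hv, mulVec_mulVec, hV, one_mulVec]
    have hvne : v ≠ 0 := by
      intro h
      have h2 : (Pi.single i 1 : Fin n → ℝ) = 0 := by rw [← hvv, h, mulVec_zero]
      simpa using congrFun h2 i
    have hpos := hP.dotProduct_mulVec_pos hvne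
    have hPv : P *ᵥ v = V *ᵥ Pi.single i (lam i) := by
      rw [hdec, hD, ← mulVec_mulVec, ← mulVec_mulVec, hvv, diagonal_mulVec_single,
        mul_one]
    have : star v ⬝ᵥ (P *ᵥ v) = lam i := by
      rw [star_trivial, hPv, dotProduct_mulVec, ← mulVec_transpose, hvv]
      simp [dotProduct, Pi.single_apply]
    rwa [this] at hpos
  have hlamminpos : 0 < lammin := by
    obtain ⟨i0, h0⟩ := hex; rw [← h0]; exact hlampos i0
  have hβpos : 0 < β := lt_trans (by positivity) hβ
  have ha : ∀ i, 1 < lam i * β := by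
    intro i
    have h1 : 1 < β * lammin := (div_lt_iff₀ hlamminpos).mp hβ
    have h2 : β * lammin ≤ lam i * β := by
      rw [mul_comm]
      exact mul_le_mul_of_nonneg_right (hmin i) hβpos.le
    linarith
  -- the two quadratic-form computations
  have hxx : ∀ x : Fin n → ℝ, x ⬝ᵥ x = ∑ i, ((Vᵀ *ᵥ x) i) ^ 2 := by
    intro x
    calc x ⬝ᵥ x = x ⬝ᵥ ((V * Vᵀ) *ᵥ x) := by rw [hVV, one_mulVec]
      _ = x ⬝ᵥ (V *ᵥ (Vᵀ *ᵥ x)) := by rw [mulVec_mulVec]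
      _ = (Vᵀ *ᵥ x) ⬝ᵥ (Vᵀ *ᵥ x) := by
          rw [dotProduct_mulVec, ← mulVec_transpose]
      _ = ∑ i, ((Vᵀ *ᵥ x) i) ^ 2 := by simp [dotProduct, sq]
  have hquad : ∀ z : Fin n → ℝ, z ⬝ᵥ (P *ᵥ z) = ∑ i, lam i * ((Vᵀ *ᵥ z) i) ^ 2 := by
    intro z
    calc z ⬝ᵥ (P *ᵥ z) = z ⬝ᵥ (V *ᵥ (D *ᵥ (Vᵀ *ᵥ z))) := by
          rw [hdec, ← mulVec_mulVec, ← mulVec_mulVec]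
      _ = (Vᵀ *ᵥ z) ⬝ᵥ (D *ᵥ (Vᵀ *ᵥ z)) := by
          rw [dotProduct_mulVec, ← mulVec_transpose]
      _ = ∑ i, lam i * ((Vᵀ *ᵥ z) i) ^ 2 := by
          rw [hD]
          simp [dotProduct, mulVec_diagonal, sq]
          exact Finset.sum_congr rfl fun i _ => by ring
  -- the key reformulation of the Lagrangian
  have key : ∀ x : Fin n → ℝ,
      -(x ⬝ᵥ x) + β * ((x - c) ⬝ᵥ P.mulVec (x - c) - 1)
        = (∑ i, (lam i * β * ((Vᵀ *ᵥ x) i - cbar i) ^ 2 - ((Vᵀ *ᵥ x) i) ^ 2)) - β := by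
    intro x
    have hsub : Vᵀ *ᵥ (x - c) = Vᵀ *ᵥ x - cbar := by
      rw [hcbar, mulVec_sub]
    rw [hxx x, hquad (x - c), hsub]
    simp only [Pi.sub_apply]
    rw [Finset.sum_sub_distrib, mul_sub, mul_one, Finset.mul_sum]
    have : ∑ i, β * (lam i * ((Vᵀ *ᵥ x) i - cbar i) ^ 2)
        = ∑ i, lam i * β * ((Vᵀ *ᵥ x) i - cbar i) ^ 2 :=
      Finset.sum_congr rfl fun i _ => by ring
    rw [this]; ring
  -- rewrite ellFun as a sum over all indices
  have hell : ellFun lam cbar β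
      = (∑ i, -((cbar i) ^ 2 * (lam i * β / (lam i * β - 1)))) - β := by
    unfold ellFun
    rw [Finset.sum_filter_of_ne (by intro i _ h hc; exact h (by rw [hc]; ring))]
    rw [Finset.sum_neg_distrib]
    ring
  constructor
  · -- membership: the minimum is attained at xstar
    set ystar : Fin n → ℝ := fun i => lam i * β * cbar i / (lam i * β - 1) with hystar
    refine ⟨V *ᵥ ystar, ?_⟩
    dsimp only
    rw [key, hell]
    have hy : Vᵀ *ᵥ (V *ᵥ ystar) = ystar := by
      rw [mulVec_mulVec, hV, one_mulVec]
    rw [hy]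
    congr 1
    refine Finset.sum_congr rfl fun i _ => ?_
    have h1 : lam i * β - 1 ≠ 0 := by have := ha i; linarith
    rw [hystar]
    field_simp
    ring
  · -- lower bound
    rintro z ⟨x, rfl⟩
    simp only
    rw [key, hell]
    have hterm : ∀ i, -((cbar i) ^ 2 * (lam i * β / (lam i * β - 1)))
        ≤ lam i * β * ((Vᵀ *ᵥ x) i - cbar i) ^ 2 - ((Vᵀ *ᵥ x) i) ^ 2 := by
      intro i
      set a := lam i * β
      set s := cbar i
      set t := (Vᵀ *ᵥ x) i
      have h1 : 0 < a - 1 := by have := ha i; simp only [a]; linarith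
      have h2 : -(s ^ 2 * (a / (a - 1))) = (-(s ^ 2 * a)) / (a - 1) := by ring
      rw [h2, div_le_iff₀ h1]
      nlinarith [sq_nonneg ((a - 1) * t - a * s)]
    have := Finset.sum_le_sum fun i (_ : i ∈ Finset.univ) => hterm i
    linarith
end
end

section
/- Let P ∈ ℝ^{n×n} be symmetric positive definite, c ∈ ℝⁿ, and β₀ := 1/λ_min(P) where λ_min(P) is the smallest eigenvalue of P. The function x ↦ −xᵀx + β₀((x−c)ᵀ P (x−c) − 1) is bounded below on ℝⁿ if and only if there exists y ∈ ℝⁿ with (P − λ_min(P)·I) y = −P c. -/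
open Matrix
open scoped RealInnerProductSpace

noncomputable section

lemma dot_symm' {n : ℕ} {A : Matrix (Fin n) (Fin n) ℝ} (hA : A.IsHermitian)
    (x y : Fin n → ℝ) : x ⬝ᵥ A.mulVec y = y ⬝ᵥ A.mulVec x := by
  rw [dotProduct_mulVec x A y, ← mulVec_transpose, dotProduct_comm]
  congr 1
  rw [show Aᵀ = A from by simpa [Matrix.IsHermitian, conjTranspose_eq_transpose_of_trivial] using hA]

theorem stmt_8 {n : ℕ} (P : Matrix (Fin n) (Fin n) ℝ) (c : Fin n → ℝ) (hP : P.PosDef)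
    (lammin : ℝ)
    (hev : ∃ v : Fin n → ℝ, v ≠ 0 ∧ P.mulVec v = lammin • v)
    (hle : ∀ (μ : ℝ) (v : Fin n → ℝ), v ≠ 0 → P.mulVec v = μ • v → lammin ≤ μ) :
    BddBelow
      (Set.range fun x : Fin n → ℝ =>
        -(x ⬝ᵥ x) + (1 / lammin) * ((x - c) ⬝ᵥ P.mulVec (x - c) - 1)) ↔
    ∃ y : Fin n → ℝ, (P - lammin • (1 : Matrix (Fin n) (Fin n) ℝ)).mulVec y = -(P.mulVec c) := by
  obtain ⟨v, hv0, hvP⟩ := hev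
  set Q : Matrix (Fin n) (Fin n) ℝ := P - lammin • (1 : Matrix (Fin n) (Fin n) ℝ) with hQdef
  have hQmul : ∀ x : Fin n → ℝ, Q.mulVec x = P.mulVec x - lammin • x := by
    intro x
    simp [hQdef, sub_mulVec, smul_mulVec]
  have hQherm : Q.IsHermitian := hP.1.sub (by simp [Matrix.IsHermitian])
  -- lammin > 0
  have hvv : 0 < v ⬝ᵥ v := by
    rcases (Finset.sum_nonneg fun i _ => mul_self_nonneg (v i)).lt_or_eq with h | h
    · exact h
    · exact absurd ((dotProduct_self_eq_zero).1 h.symm) hv0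
  have hPv : 0 < v ⬝ᵥ P.mulVec v := by simpa using hP.dotProduct_mulVec_pos hv0
  have hlam : 0 < lammin := by
    have h1 : v ⬝ᵥ P.mulVec v = lammin * (v ⬝ᵥ v) := by
      rw [hvP, dotProduct_smul, smul_eq_mul]
    nlinarith
  -- Q is positive semidefinite
  have hQpsd : Q.PosSemidef := by
    apply (Matrix.IsHermitian.posSemidef_iff_eigenvalues_nonneg hQherm).mpr
    intro i
    have hw := hQherm.mulVec_eigenvectorBasis i
    have hw0 : (⇑(hQherm.eigenvectorBasis i) : Fin n → ℝ) ≠ 0 := by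
      have h := hQherm.eigenvectorBasis.orthonormal.ne_zero i
      intro hc; exact h (by ext j; exact congrFun hc j)
    have hPw : P.mulVec (⇑(hQherm.eigenvectorBasis i)) =
        (hQherm.eigenvalues i + lammin) • (⇑(hQherm.eigenvectorBasis i)) := by
      have := hQmul (⇑(hQherm.eigenvectorBasis i))
      rw [hw] at this
      rw [add_smul, this]
      abel
    have := hle _ _ hw0 hPw
    show 0 ≤ hQherm.eigenvalues i
    linarith
  have hQnn : ∀ x : Fin n → ℝ, 0 ≤ x ⬝ᵥ Q.mulVec x := by
    intro x; simpa using hQpsd.dotProduct_mulVec_nonneg x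
  -- key identity
  have hfid : ∀ x : Fin n → ℝ,
      -(x ⬝ᵥ x) + (1 / lammin) * ((x - c) ⬝ᵥ P.mulVec (x - c) - 1) =
      (1 / lammin) * (x ⬝ᵥ Q.mulVec x - 2 * ((P.mulVec c) ⬝ᵥ x) + (c ⬝ᵥ P.mulVec c - 1)) := by
    intro x
    have h1 : x ⬝ᵥ Q.mulVec x = x ⬝ᵥ P.mulVec x - lammin * (x ⬝ᵥ x) := by
      rw [hQmul, dotProduct_sub, dotProduct_smul, smul_eq_mul]
    have h2 : (x - c) ⬝ᵥ P.mulVec (x - c) =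
        x ⬝ᵥ P.mulVec x - 2 * ((P.mulVec c) ⬝ᵥ x) + c ⬝ᵥ P.mulVec c := by
      have hxc : c ⬝ᵥ P.mulVec x = (P.mulVec c) ⬝ᵥ x := by
        rw [dot_symm' hP.1 c x, dotProduct_comm]
      have hcx : x ⬝ᵥ P.mulVec c = (P.mulVec c) ⬝ᵥ x := dotProduct_comm _ _
      rw [mulVec_sub, sub_dotProduct, dotProduct_sub, dotProduct_sub, hxc, hcx]
      ring
    rw [h2, h1]
    field_simp
    ring
  constructor
  · -- bounded below → exists y
    intro hbdd
    by_contra hno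
    push_neg at hno
    -- build z in the kernel not orthogonal to P c
    set T : EuclideanSpace ℝ (Fin n) →ₗ[ℝ] EuclideanSpace ℝ (Fin n) := Matrix.toEuclideanLin Q with hT
    have hTsym : T.IsSymmetric := (Matrix.isHermitian_iff_isSymmetric).1 hQherm
    set W : Submodule ℝ (EuclideanSpace ℝ (Fin n)) := LinearMap.range T with hW
    set vv : EuclideanSpace ℝ (Fin n) := (WithLp.equiv 2 (Fin n → ℝ)).symm (-(P.mulVec c)) with hvv'
    have hvW : vv ∉ W := by
      rintro ⟨u, hu⟩
      exact hno (WithLp.equiv 2 (Fin n → ℝ) u) (by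
        have := congrArg (WithLp.equiv 2 (Fin n → ℝ)) hu
        simpa [hT, hvv'] using this)
    set z' : EuclideanSpace ℝ (Fin n) := vv - (W.orthogonalProjectionOnto vv : EuclideanSpace ℝ (Fin n)) with hz'
    have hz'W : z' ∈ Wᗮ := by exact W.sub_starProjection_mem_orthogonal vv
    have hz'0 : z' ≠ 0 := by
      intro h
      apply hvW
      rw [sub_eq_zero] at h
      rw [h]
      exact (W.orthogonalProjectionOnto vv).2
    have hinner : (inner ℝ vv z' : ℝ) = ‖z'‖ ^ 2 := by
      have hv' : vv = z' + (W.orthogonalProjectionOnto vv : EuclideanSpace ℝ (Fin n)) := by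
        rw [hz']; abel
      rw [hv', inner_add_left]
      have h0 : (inner ℝ ((W.orthogonalProjectionOnto vv : EuclideanSpace ℝ (Fin n))) z' : ℝ) = 0 :=
        (Submodule.mem_orthogonal W z').1 hz'W _ (W.orthogonalProjectionOnto vv).2
      rw [h0, real_inner_self_eq_norm_sq]
      ring
    have hTz' : T z' = 0 := by
      have h1 : ∀ u : EuclideanSpace ℝ (Fin n), (inner ℝ u (T z') : ℝ) = 0 := by
        intro u
        rw [← hTsym u z']
        exact (Submodule.mem_orthogonal W z').1 hz'W _ ⟨u, rfl⟩
      have := h1 (T z')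
      rwa [inner_self_eq_zero] at this
    set z : Fin n → ℝ := WithLp.equiv 2 (Fin n → ℝ) z' with hz
    have hQz : Q.mulVec z = 0 := by
      have := congrArg (WithLp.equiv 2 (Fin n → ℝ)) hTz'
      simpa [hT, hz] using this
    have hPcz : (P.mulVec c) ⬝ᵥ z = -‖z'‖ ^ 2 := by
      have h1 : (inner ℝ vv z' : ℝ) = (-(P.mulVec c)) ⬝ᵥ z := by
        rw [EuclideanSpace.inner_eq_star_dotProduct]
        simp [hvv', hz]
        exact dotProduct_comm _ _
      rw [h1] at hinner
      rw [neg_dotProduct] at hinner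
      linarith
    have ha : 0 < ‖z'‖ ^ 2 := by
      have h := norm_pos_iff.mpr hz'0
      positivity
    obtain ⟨m, hm⟩ := hbdd
    set a : ℝ := ‖z'‖ ^ 2 with hA
    set C : ℝ := c ⬝ᵥ P.mulVec c - 1 with hC
    set t : ℝ := (lammin * m - C - 1) / (2 * a) with ht
    have hmem : m ≤ -((t • z) ⬝ᵥ (t • z)) +
        (1 / lammin) * (((t • z) - c) ⬝ᵥ P.mulVec ((t • z) - c) - 1) := hm ⟨t • z, rfl⟩
    rw [hfid] at hmem
    have hqz : (t • z) ⬝ᵥ Q.mulVec (t • z) = 0 := by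
      rw [mulVec_smul, dotProduct_smul, smul_dotProduct, hQz]
      simp
    have hlin : (P.mulVec c) ⬝ᵥ (t • z) = t * (-a) := by
      rw [dotProduct_smul, hPcz, smul_eq_mul]
    rw [hqz, hlin] at hmem
    have h2ta : 2 * (t * (-a)) = -(lammin * m - C - 1) := by
      rw [ht]
      field_simp
    rw [h2ta] at hmem
    have : (1 / lammin) * (0 - -(lammin * m - C - 1) + C) = m - 1 / lammin := by
      field_simp
      ring
    rw [this] at hmem
    have : 0 < 1 / lammin := by positivity
    linarith
  · -- exists y → bounded below
    rintro ⟨y, hy⟩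
    refine ⟨(1 / lammin) * ((c ⬝ᵥ P.mulVec c - 1) - y ⬝ᵥ Q.mulVec y), ?_⟩
    rintro r ⟨x, rfl⟩
    dsimp only
    rw [hfid]
    have hsq : 0 ≤ (x + y) ⬝ᵥ Q.mulVec (x + y) := hQnn (x + y)
    have hexp : (x + y) ⬝ᵥ Q.mulVec (x + y) =
        x ⬝ᵥ Q.mulVec x + 2 * ((Q.mulVec y) ⬝ᵥ x) + y ⬝ᵥ Q.mulVec y := by
      have h1 : y ⬝ᵥ Q.mulVec x = (Q.mulVec y) ⬝ᵥ x := by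
        rw [dot_symm' hQherm y x, dotProduct_comm]
      have h2 : x ⬝ᵥ Q.mulVec y = (Q.mulVec y) ⬝ᵥ x := dotProduct_comm _ _
      rw [mulVec_add, add_dotProduct, dotProduct_add, dotProduct_add, h1, h2]
      ring
    have hQyx : (Q.mulVec y) ⬝ᵥ x = -((P.mulVec c) ⬝ᵥ x) := by
      rw [hy, neg_dotProduct]
    have hkey : -(y ⬝ᵥ Q.mulVec y) ≤ x ⬝ᵥ Q.mulVec x - 2 * ((P.mulVec c) ⬝ᵥ x) := by
      rw [hexp, hQyx] at hsq
      linarith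
    have h1lam : (0:ℝ) ≤ 1 / lammin := by positivity
    exact mul_le_mul_of_nonneg_left (by linarith) h1lam
end
end

section
/- Let P ∈ ℝ^{n×n} be symmetric positive definite and c ∈ ℝⁿ. Then strong duality holds for the problem of maximizing the Euclidean norm over the ellipsoid: inf { −xᵀx : x ∈ ℝⁿ, (x−c)ᵀ P (x−c) ≤ 1 } = sup { ℓ_{c,P}(β) : β ∈ I_P }. -/
open Matrix

noncomputable section

/-- The closed Euclidean unit ball `B(0,1) = {x | xᵀx ≤ 1}`. -/
def UnitBall (n : ℕ) : Set (Fin n → ℝ) :=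
  {x | x ⬝ᵥ x ≤ 1}

namespace StrongDualAux

namespace StrongDual

open Classical

variable {n : ℕ}

/-- the constraint quadratic in eigen-coordinates -/
def gfun (lam cbar : Fin n → ℝ) (y : Fin n → ℝ) : ℝ := ∑ i, lam i * (y i - cbar i) ^ 2

/-- value of the constraint at the candidate minimizer of the Lagrangian -/
def hfun (lam cbar : Fin n → ℝ) (β : ℝ) : ℝ :=
  ∑ i, if cbar i ≠ 0 then lam i * cbar i ^ 2 / (lam i * β - 1) ^ 2 else 0

/-- the per-coordinate residual in the completion-of-squares identity -/
def rfun (lam cbar : Fin n → ℝ) (β : ℝ) (y : Fin n → ℝ) (i : Fin n) : ℝ :=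
  (lam i * β - 1) * y i ^ 2 - 2 * (β * lam i * cbar i) * y i + β * lam i * cbar i ^ 2
    + (if cbar i ≠ 0 then cbar i ^ 2 * (lam i * β / (lam i * β - 1)) else 0)

lemma ellFun_eq (lam cbar : Fin n → ℝ) (β : ℝ) :
    ellFun lam cbar β
      = -β - ∑ i, (if cbar i ≠ 0 then cbar i ^ 2 * (lam i * β / (lam i * β - 1)) else 0) := by
  rw [ellFun, Finset.sum_filter]

lemma identity (lam cbar : Fin n → ℝ) (β : ℝ) (y : Fin n → ℝ) :
    -(∑ i, y i ^ 2) + β * gfun lam cbar y - β - ellFun lam cbar β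
      = ∑ i, rfun lam cbar β y i := by
  have hcongr : ∀ i ∈ Finset.univ, rfun lam cbar β y i
      = (β * (lam i * (y i - cbar i) ^ 2)
          + (if cbar i ≠ 0 then cbar i ^ 2 * (lam i * β / (lam i * β - 1)) else 0)) - y i ^ 2 := by
    intro i _
    rw [rfun]; split_ifs <;> ring
  rw [Finset.sum_congr rfl hcongr, Finset.sum_sub_distrib, Finset.sum_add_distrib,
    ellFun_eq, gfun, Finset.mul_sum]
  ring

lemma r_nonneg (lam cbar : Fin n → ℝ) (β : ℝ) (y : Fin n → ℝ) (i : Fin n)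
    (hA : 0 ≤ lam i * β - 1) (hA' : cbar i ≠ 0 → 0 < lam i * β - 1) :
    0 ≤ rfun lam cbar β y i := by
  by_cases hc : cbar i = 0
  · have heq : rfun lam cbar β y i = (lam i * β - 1) * y i ^ 2 := by
      rw [rfun, if_neg (by simpa using hc), hc]; ring
    rw [heq]; exact mul_nonneg hA (sq_nonneg _)
  · have hA2 := hA' hc
    have hne : lam i * β - 1 ≠ 0 := ne_of_gt hA2
    have key : rfun lam cbar β y i
        = ((lam i * β - 1) * y i - β * lam i * cbar i) ^ 2 / (lam i * β - 1) := by
      rw [rfun, if_pos hc]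
      field_simp
      ring
    rw [key]; positivity

lemma r_eq_zero (lam cbar : Fin n → ℝ) (β : ℝ) (y : Fin n → ℝ) (i : Fin n)
    (hA' : cbar i ≠ 0 → lam i * β - 1 ≠ 0)
    (hy : (lam i * β - 1) * y i = β * lam i * cbar i) :
    rfun lam cbar β y i = 0 := by
  by_cases hc : cbar i = 0
  · have hy0 : (lam i * β - 1) * y i = 0 := by rw [hy, hc]; ring
    have : rfun lam cbar β y i = ((lam i * β - 1) * y i) * y i := by
      rw [rfun, if_neg (by simpa using hc), hc]; ring
    rw [this, hy0, zero_mul]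
  · have hne := hA' hc
    have hyi : y i = β * lam i * cbar i / (lam i * β - 1) := by
      field_simp at hy ⊢; linarith [hy]
    rw [rfun, if_pos hc, hyi]
    field_simp
    ring

end StrongDual

namespace StrongDual
open Classical
variable {n : ℕ}

lemma dom_facts (lam cbar : Fin n → ℝ) (lammin : ℝ) (h0 : 0 < lammin)
    (hmin : ∀ i, lammin ≤ lam i) {β : ℝ} (hβ : β ∈ ellDom lam cbar lammin) :
    1 / lammin ≤ β ∧ (∀ i, 0 ≤ lam i * β - 1) ∧ (∀ i, cbar i ≠ 0 → 0 < lam i * β - 1) := by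
  have hlam : ∀ i, 0 < lam i := fun i => lt_of_lt_of_le h0 (hmin i)
  rw [ellDom] at hβ
  split_ifs at hβ with hcase
  · have hβ' : 1 / lammin < β := hβ
    have key : ∀ i, 0 < lam i * β - 1 := by
      intro i
      have h1 : lam i * (1 / lammin) < lam i * β := by
        exact mul_lt_mul_of_pos_left hβ' (hlam i)
      have h2 : (1 : ℝ) ≤ lam i * (1 / lammin) := by
        rw [mul_one_div, le_div_iff₀ h0, one_mul]; exact hmin i
      linarith
    exact ⟨le_of_lt hβ', fun i => le_of_lt (key i), fun i _ => key i⟩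
  · have hβ' : 1 / lammin ≤ β := hβ
    refine ⟨hβ', fun i => ?_, fun i hc => ?_⟩
    · have h1 : lam i * (1 / lammin) ≤ lam i * β :=
        mul_le_mul_of_nonneg_left hβ' (le_of_lt (hlam i))
      have h2 : (1 : ℝ) ≤ lam i * (1 / lammin) := by
        rw [mul_one_div, le_div_iff₀ h0, one_mul]; exact hmin i
      linarith
    · have hne : lam i ≠ lammin := fun h => hcase ⟨i, hc, h⟩
      have hlt : lammin < lam i := lt_of_le_of_ne (hmin i) (Ne.symm hne)
      have h1 : lam i * (1 / lammin) ≤ lam i * β :=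
        mul_le_mul_of_nonneg_left hβ' (le_of_lt (hlam i))
      have h2 : (1 : ℝ) < lam i * (1 / lammin) := by
        rw [mul_one_div, lt_div_iff₀ h0, one_mul]; exact hlt
      linarith

lemma dom_pos (lam cbar : Fin n → ℝ) (lammin : ℝ) (h0 : 0 < lammin)
    (hmin : ∀ i, lammin ≤ lam i) {β : ℝ} (hβ : β ∈ ellDom lam cbar lammin) : 0 < β := by
  have h := (dom_facts lam cbar lammin h0 hmin hβ).1
  have : (0:ℝ) < 1 / lammin := by positivity
  linarith

lemma weak_duality (lam cbar : Fin n → ℝ) (lammin : ℝ) (h0 : 0 < lammin)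
    (hmin : ∀ i, lammin ≤ lam i) {β : ℝ} (hβ : β ∈ ellDom lam cbar lammin)
    {y : Fin n → ℝ} (hy : gfun lam cbar y ≤ 1) :
    ellFun lam cbar β ≤ -(∑ i, y i ^ 2) := by
  obtain ⟨-, hA, hA'⟩ := dom_facts lam cbar lammin h0 hmin hβ
  have hβpos := dom_pos lam cbar lammin h0 hmin hβ
  have hr : 0 ≤ ∑ i, rfun lam cbar β y i :=
    Finset.sum_nonneg fun i _ => r_nonneg lam cbar β y i (hA i) (hA' i)
  have hid := identity lam cbar β y
  have hg : β * gfun lam cbar y ≤ β * 1 := mul_le_mul_of_nonneg_left hy (le_of_lt hβpos)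
  linarith

lemma strong_eq (lam cbar : Fin n → ℝ) (β : ℝ) (y : Fin n → ℝ)
    (hA' : ∀ i, cbar i ≠ 0 → lam i * β - 1 ≠ 0)
    (hy : ∀ i, (lam i * β - 1) * y i = β * lam i * cbar i)
    (hg : gfun lam cbar y = 1) :
    ellFun lam cbar β = -(∑ i, y i ^ 2) := by
  have hid := identity lam cbar β y
  have hr : ∑ i, rfun lam cbar β y i = 0 :=
    Finset.sum_eq_zero fun i _ => r_eq_zero lam cbar β y i (hA' i) (hy i)
  rw [hg] at hid
  linarith

end StrongDual

namespace StrongDual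
open Classical
variable {n : ℕ}

/-- candidate optimal primal point -/
def ydef (lam cbar : Fin n → ℝ) (β t : ℝ) (j : Fin n) (i : Fin n) : ℝ :=
  if cbar i ≠ 0 then β * lam i * cbar i / (lam i * β - 1) else if i = j then t else 0

lemma hy_ydef (lam cbar : Fin n → ℝ) (β t : ℝ) (j : Fin n)
    (hA' : ∀ i, cbar i ≠ 0 → lam i * β - 1 ≠ 0)
    (ht : (lam j * β - 1) * t = 0) :
    ∀ i, (lam i * β - 1) * ydef lam cbar β t j i = β * lam i * cbar i := by
  intro i
  rw [ydef]
  by_cases hc : cbar i = 0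
  · rw [if_neg (by simpa using hc), hc, mul_zero]
    by_cases hij : i = j
    · rw [if_pos hij, hij]; exact ht
    · rw [if_neg hij, mul_zero]
  · rw [if_pos hc, mul_div_assoc']
    exact mul_div_cancel_left₀ _ (hA' i hc)

lemma g_ydef (lam cbar : Fin n → ℝ) (β t : ℝ) (j : Fin n)
    (hA' : ∀ i, cbar i ≠ 0 → lam i * β - 1 ≠ 0) :
    gfun lam cbar (ydef lam cbar β t j)
      = hfun lam cbar β + (if cbar j ≠ 0 then 0 else lam j * t ^ 2) := by
  rw [gfun, hfun]
  have hcongr : ∀ i ∈ Finset.univ,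
      lam i * (ydef lam cbar β t j i - cbar i) ^ 2
        = (if cbar i ≠ 0 then lam i * cbar i ^ 2 / (lam i * β - 1) ^ 2 else 0)
          + (if i = j then (if cbar j ≠ 0 then 0 else lam j * t ^ 2) else 0) := by
    intro i _
    by_cases hc : cbar i = 0
    · by_cases hij : i = j
      · subst hij
        simp [ydef, hc]
      · simp [ydef, hc, hij]
    · have hne := hA' i hc
      rw [ydef, if_pos hc, if_pos hc]
      have h2 : β * lam i * cbar i / (lam i * β - 1) - cbar i
          = cbar i / (lam i * β - 1) := by
        rw [eq_div_iff hne, sub_mul, div_mul_cancel₀ _ hne]; ring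
      rw [h2]
      have hterm : lam i * (cbar i / (lam i * β - 1)) ^ 2
          = lam i * cbar i ^ 2 / (lam i * β - 1) ^ 2 := by
        field_simp
      rw [hterm]
      by_cases hij : i = j
      · rw [if_pos hij]
        have : cbar j ≠ 0 := hij ▸ hc
        rw [if_pos (by simpa using this), add_zero]
      · rw [if_neg hij, add_zero]
  rw [Finset.sum_congr rfl hcongr, Finset.sum_add_distrib]
  congr 1
  rw [Finset.sum_ite_eq' Finset.univ j (fun _ => if cbar j ≠ 0 then 0 else lam j * t ^ 2)]
  simp

/-- Upper bound on `hfun` for large `β`. -/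
lemma hfun_le (lam cbar : Fin n → ℝ) (lammin : ℝ) (h0 : 0 < lammin)
    (hmin : ∀ i, lammin ≤ lam i) {b : ℝ}
    (hb : (1 + Real.sqrt ((∑ i, if cbar i ≠ 0 then lam i * cbar i ^ 2 else 0) + 1)) / lammin ≤ b) :
    hfun lam cbar b ≤ 1 := by
  set K := ∑ i, if cbar i ≠ 0 then lam i * cbar i ^ 2 else 0 with hK
  have hKnn : 0 ≤ K := Finset.sum_nonneg fun i _ => by
    split_ifs
    · have : 0 < lam i := lt_of_lt_of_le h0 (hmin i)
      positivity
    · exact le_refl 0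
  have hsq : Real.sqrt (K + 1) ^ 2 = K + 1 := Real.sq_sqrt (by linarith)
  have hsqpos : 0 < Real.sqrt (K + 1) := Real.sqrt_pos.mpr (by linarith)
  have hden : ∀ i, Real.sqrt (K + 1) ≤ lam i * b - 1 := by
    intro i
    have h1 : 1 + Real.sqrt (K + 1) ≤ lammin * b := by
      rw [← div_le_iff₀' h0]; exact hb
    have hbpos : 0 < b := by nlinarith
    have h2 : lammin * b ≤ lam i * b := mul_le_mul_of_nonneg_right (hmin i) (le_of_lt hbpos)
    linarith
  have hterm : ∀ i ∈ Finset.univ,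
      (if cbar i ≠ 0 then lam i * cbar i ^ 2 / (lam i * b - 1) ^ 2 else 0)
        ≤ (if cbar i ≠ 0 then lam i * cbar i ^ 2 else 0) / (K + 1) := by
    intro i _
    split_ifs with hc
    · have hnum : 0 ≤ lam i * cbar i ^ 2 := by
        have : 0 < lam i := lt_of_lt_of_le h0 (hmin i)
        positivity
      have hd1 : K + 1 ≤ (lam i * b - 1) ^ 2 := by
        rw [← hsq]
        have := hden i
        nlinarith [hsqpos]
      have h1 : (0:ℝ) < K + 1 := by linarith
      exact div_le_div_of_nonneg_left hnum h1 hd1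
    · simp
  calc hfun lam cbar b ≤ ∑ i, (if cbar i ≠ 0 then lam i * cbar i ^ 2 else 0) / (K + 1) :=
        Finset.sum_le_sum hterm
    _ = K / (K + 1) := by rw [← Finset.sum_div]
    _ ≤ 1 := by rw [div_le_one (by linarith)]; linarith

end StrongDual

namespace StrongDual
open Classical
variable {n : ℕ}

lemma hfun_contOn (lam cbar : Fin n → ℝ) (a : ℝ) (hapos : 0 < a)
    (hlam : ∀ i, 0 < lam i)
    (haA : ∀ i, cbar i ≠ 0 → 0 < lam i * a - 1) :
    ContinuousOn (hfun lam cbar) (Set.Ici a) := by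
  apply continuousOn_finset_sum
  intro i _
  by_cases hc : cbar i ≠ 0
  · simp only [if_pos hc]
    apply ContinuousOn.div continuousOn_const
    · exact Continuous.continuousOn (by continuity)
    · intro b hb
      have hba : a ≤ b := hb
      have : lam i * a - 1 ≤ lam i * b - 1 := by
        have := mul_le_mul_of_nonneg_left hba (le_of_lt (hlam i))
        linarith
      have hpos : 0 < lam i * b - 1 := lt_of_lt_of_le (haA i hc) this
      positivity
  · simp only [if_neg hc]
    exact continuousOn_const

lemma exists_root (lam cbar : Fin n → ℝ) (lammin : ℝ) (h0 : 0 < lammin)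
    (hmin : ∀ i, lammin ≤ lam i) (a : ℝ) (hapos : 0 < a)
    (haA : ∀ i, cbar i ≠ 0 → 0 < lam i * a - 1)
    (ha1 : 1 ≤ hfun lam cbar a) :
    ∃ b, a ≤ b ∧ hfun lam cbar b = 1 := by
  have hlam : ∀ i, 0 < lam i := fun i => lt_of_lt_of_le h0 (hmin i)
  set B := max a ((1 + Real.sqrt ((∑ i, if cbar i ≠ 0 then lam i * cbar i ^ 2 else 0) + 1)) / lammin)
    with hB
  have haB : a ≤ B := le_max_left _ _
  have hhB : hfun lam cbar B ≤ 1 := hfun_le lam cbar lammin h0 hmin (le_max_right _ _)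
  have hcont : ContinuousOn (hfun lam cbar) (Set.Icc a B) :=
    (hfun_contOn lam cbar a hapos hlam haA).mono Set.Icc_subset_Ici_self
  have := intermediate_value_Icc' haB hcont
  have h1mem : (1:ℝ) ∈ Set.Icc (hfun lam cbar B) (hfun lam cbar a) := ⟨hhB, ha1⟩
  obtain ⟨b, hbmem, hb⟩ := this h1mem
  exact ⟨b, hbmem.1, hb⟩

lemma exists_opt (lam cbar : Fin n → ℝ) (lammin : ℝ) (h0 : 0 < lammin)
    (hmin : ∀ i, lammin ≤ lam i) (hex : ∃ j, lam j = lammin) :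
    ∃ β ∈ ellDom lam cbar lammin, ∃ y : Fin n → ℝ,
      gfun lam cbar y = 1 ∧ (∀ i, cbar i ≠ 0 → lam i * β - 1 ≠ 0) ∧
      (∀ i, (lam i * β - 1) * y i = β * lam i * cbar i) := by
  have hlam : ∀ i, 0 < lam i := fun i => lt_of_lt_of_le h0 (hmin i)
  by_cases hcase : ∃ i, cbar i ≠ 0 ∧ lam i = lammin
  · obtain ⟨i0, hc0, hl0⟩ := hcase
    set β₁ := (1 + Real.sqrt lammin * |cbar i0|) / lammin with hβ₁
    have habs : 0 < |cbar i0| := abs_pos.mpr hc0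
    have hsl : 0 < Real.sqrt lammin := Real.sqrt_pos.mpr h0
    have hd1 : lammin * β₁ - 1 = Real.sqrt lammin * |cbar i0| := by
      rw [hβ₁, mul_div_cancel₀ _ (ne_of_gt h0)]; ring
    have hd1pos : 0 < lammin * β₁ - 1 := by rw [hd1]; positivity
    have hβ₁pos : 0 < β₁ := by
      rw [hβ₁]; positivity
    have hβ₁gt : 1 / lammin < β₁ := by
      rw [div_lt_iff₀ h0, mul_comm]; linarith
    have haA : ∀ i, cbar i ≠ 0 → 0 < lam i * β₁ - 1 := by
      intro i _
      have : lammin * β₁ ≤ lam i * β₁ := mul_le_mul_of_nonneg_right (hmin i) (le_of_lt hβ₁pos)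
      linarith
    have hterm : hfun lam cbar β₁ ≥ 1 := by
      have hsq : (lam i0 * β₁ - 1) ^ 2 = lammin * cbar i0 ^ 2 := by
        rw [hl0, hd1, mul_pow, Real.sq_sqrt (le_of_lt h0), sq_abs]
      have hval : (if cbar i0 ≠ 0 then lam i0 * cbar i0 ^ 2 / (lam i0 * β₁ - 1) ^ 2 else 0)
          = 1 := by
        rw [if_pos hc0, hsq, hl0]
        field_simp
      have hnn : ∀ i ∈ Finset.univ,
          0 ≤ (if cbar i ≠ 0 then lam i * cbar i ^ 2 / (lam i * β₁ - 1) ^ 2 else 0) := by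
        intro i _
        split_ifs with hc
        · have h1 := hlam i
          have h2 := haA i hc
          positivity
        · exact le_refl 0
      calc (1:ℝ) = _ := hval.symm
        _ ≤ hfun lam cbar β₁ := Finset.single_le_sum hnn (Finset.mem_univ i0)
    obtain ⟨b, hab, hb⟩ := exists_root lam cbar lammin h0 hmin β₁ hβ₁pos haA hterm
    have hbA : ∀ i, cbar i ≠ 0 → 0 < lam i * b - 1 := by
      intro i hc
      have h1 := haA i hc
      have : lam i * β₁ ≤ lam i * b := mul_le_mul_of_nonneg_left hab (le_of_lt (hlam i))
      linarith
    refine ⟨b, ?_, ydef lam cbar b 0 i0, ?_, ?_, ?_⟩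
    · rw [ellDom, if_pos ⟨i0, hc0, hl0⟩]
      exact lt_of_lt_of_le hβ₁gt hab
    · rw [g_ydef lam cbar b 0 i0 (fun i hc => ne_of_gt (hbA i hc)), hb]
      split_ifs <;> ring
    · exact fun i hc => ne_of_gt (hbA i hc)
    · exact hy_ydef lam cbar b 0 i0 (fun i hc => ne_of_gt (hbA i hc)) (by ring)
  · obtain ⟨j, hj⟩ := hex
    have hcj : cbar j = 0 := by
      by_contra hcj
      exact hcase ⟨j, hcj, hj⟩
    have hβ₀pos : (0:ℝ) < 1 / lammin := by positivity
    have hA0 : ∀ i, cbar i ≠ 0 → 0 < lam i * (1 / lammin) - 1 := by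
      intro i hc
      have hne : lam i ≠ lammin := fun h => hcase ⟨i, hc, h⟩
      have hlt : lammin < lam i := lt_of_le_of_ne (hmin i) (Ne.symm hne)
      rw [mul_one_div]
      have : 1 < lam i / lammin := by rw [lt_div_iff₀ h0, one_mul]; exact hlt
      linarith
    have hdom : (1 / lammin : ℝ) ∈ ellDom lam cbar lammin := by
      rw [ellDom, if_neg hcase]
      exact Set.self_mem_Ici
    by_cases hh : hfun lam cbar (1 / lammin) ≤ 1
    · -- take β = 1/lammin and add mass in coordinate j
      set t := Real.sqrt ((1 - hfun lam cbar (1 / lammin)) / lammin) with htdef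
      have hAj : lam j * (1 / lammin) - 1 = 0 := by
        rw [hj, mul_one_div, div_self (ne_of_gt h0)]; ring
      refine ⟨1 / lammin, hdom, ydef lam cbar (1 / lammin) t j, ?_,
        fun i hc => ne_of_gt (hA0 i hc), ?_⟩
      · rw [g_ydef lam cbar (1 / lammin) t j (fun i hc => ne_of_gt (hA0 i hc)),
          if_neg (by simpa using hcj)]
        have ht2 : t ^ 2 = (1 - hfun lam cbar (1 / lammin)) / lammin := by
          rw [htdef, Real.sq_sqrt]
          apply div_nonneg _ (le_of_lt h0)
          linarith
        rw [hj, ht2]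
        field_simp
        ring
      · exact hy_ydef lam cbar (1 / lammin) t j (fun i hc => ne_of_gt (hA0 i hc))
          (by rw [hAj, zero_mul])
    · push_neg at hh
      obtain ⟨b, hab, hb⟩ := exists_root lam cbar lammin h0 hmin (1 / lammin) hβ₀pos hA0
        (le_of_lt hh)
      have hbA : ∀ i, cbar i ≠ 0 → 0 < lam i * b - 1 := by
        intro i hc
        have h1 := hA0 i hc
        have : lam i * (1 / lammin) ≤ lam i * b := mul_le_mul_of_nonneg_left hab
          (le_of_lt (hlam i))
        linarith
      refine ⟨b, ?_, ydef lam cbar b 0 j, ?_, fun i hc => ne_of_gt (hbA i hc), ?_⟩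
      · rw [ellDom, if_neg hcase]; exact hab
      · rw [g_ydef lam cbar b 0 j (fun i hc => ne_of_gt (hbA i hc)), hb]
        split_ifs <;> ring
      · exact hy_ydef lam cbar b 0 j (fun i hc => ne_of_gt (hbA i hc)) (by ring)

end StrongDual

namespace StrongDual
open Classical
variable {n : ℕ}

lemma main_y (lam cbar : Fin n → ℝ) (lammin : ℝ) (h0 : 0 < lammin)
    (hmin : ∀ i, lammin ≤ lam i) (hex : ∃ j, lam j = lammin) :
    sInf ((fun y : Fin n → ℝ => -(∑ i, y i ^ 2)) '' {y | gfun lam cbar y ≤ 1})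
      = sSup (ellFun lam cbar '' ellDom lam cbar lammin) := by
  obtain ⟨β, hβdom, ystar, hg, hA', hy⟩ := exists_opt lam cbar lammin h0 hmin hex
  have hv : ellFun lam cbar β = -(∑ i, ystar i ^ 2) := strong_eq lam cbar β ystar hA' hy hg
  set v := -(∑ i, ystar i ^ 2) with hvdef
  have hv1 : v ∈ (fun y : Fin n → ℝ => -(∑ i, y i ^ 2)) '' {y | gfun lam cbar y ≤ 1} :=
    ⟨ystar, by rw [Set.mem_setOf_eq, hg], rfl⟩
  have hv2 : v ∈ ellFun lam cbar '' ellDom lam cbar lammin := ⟨β, hβdom, hv⟩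
  have hlow : ∀ p ∈ (fun y : Fin n → ℝ => -(∑ i, y i ^ 2)) '' {y | gfun lam cbar y ≤ 1},
      v ≤ p := by
    rintro p ⟨y, hyy, rfl⟩
    calc v = ellFun lam cbar β := hv.symm
      _ ≤ _ := weak_duality lam cbar lammin h0 hmin hβdom hyy
  have hup : ∀ d ∈ ellFun lam cbar '' ellDom lam cbar lammin, d ≤ v := by
    rintro d ⟨β', hβ', rfl⟩
    exact weak_duality lam cbar lammin h0 hmin hβ' (le_of_eq hg)
  have h1 : sInf ((fun y : Fin n → ℝ => -(∑ i, y i ^ 2)) '' {y | gfun lam cbar y ≤ 1}) = v :=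
    le_antisymm (csInf_le ⟨v, hlow⟩ hv1) (le_csInf ⟨v, hv1⟩ hlow)
  have h2 : sSup (ellFun lam cbar '' ellDom lam cbar lammin) = v :=
    le_antisymm (csSup_le ⟨v, hv2⟩ hup) (le_csSup ⟨v, hup⟩ hv2)
  rw [h1, h2]

end StrongDual


end StrongDualAux

open StrongDualAux.StrongDual in
theorem stmt_10 {n : ℕ} (P V D : Matrix (Fin n) (Fin n) ℝ) (lam : Fin n → ℝ)
    (c : Fin n → ℝ) (hP : P.PosDef)
    (hV : Vᵀ * V = 1) (hD : D = Matrix.diagonal lam) (hdec : P = V * D * Vᵀ)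
    (lammin : ℝ) (hmin : ∀ i, lammin ≤ lam i) (hex : ∃ i, lam i = lammin) :
    sInf ((fun x : Fin n → ℝ => -(x ⬝ᵥ x)) '' {x | (x - c) ⬝ᵥ P.mulVec (x - c) ≤ 1}) =
      sSup (ellFun lam (Vᵀ.mulVec c) '' ellDom lam (Vᵀ.mulVec c) lammin) := by
  classical
  have hV' : V * Vᵀ = 1 := mul_eq_one_comm.mp hV
  set cbar := Vᵀ.mulVec c with hcbar
  -- quadratic form of P in eigencoordinates
  have hdot : ∀ z : Fin n → ℝ, z ⬝ᵥ P.mulVec z = ∑ i, lam i * ((Vᵀ.mulVec z) i) ^ 2 := by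
    intro z
    have h1 : P.mulVec z = V.mulVec ((Matrix.diagonal lam).mulVec (Vᵀ.mulVec z)) := by
      rw [Matrix.mulVec_mulVec, Matrix.mulVec_mulVec, hdec, hD, Matrix.mul_assoc]
    rw [h1, Matrix.dotProduct_mulVec]
    have h2 : z ᵥ* V = Vᵀ.mulVec z := by
      rw [← Matrix.transpose_transpose V, Matrix.vecMul_transpose, Matrix.transpose_transpose]
    rw [h2, dotProduct]
    apply Finset.sum_congr rfl
    intro i _
    rw [Matrix.mulVec_diagonal]
    ring
  -- the Euclidean norm in eigencoordinates
  have hnorm : ∀ x : Fin n → ℝ, x ⬝ᵥ x = ∑ i, ((Vᵀ.mulVec x) i) ^ 2 := by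
    intro x
    have h1 : ∑ i, ((Vᵀ.mulVec x) i) ^ 2 = (Vᵀ.mulVec x) ⬝ᵥ (Vᵀ.mulVec x) := by
      rw [dotProduct]
      exact Finset.sum_congr rfl fun i _ => (sq ((Vᵀ.mulVec x) i)).symm ▸ (by ring)
    rw [h1, Matrix.dotProduct_mulVec, Matrix.vecMul_transpose, Matrix.mulVec_mulVec, hV',
      Matrix.one_mulVec]
  -- the eigenvalues are positive
  have hlampos : ∀ i, 0 < lam i := by
    intro i
    set v := V.mulVec (Pi.single i 1) with hvdef
    have hvz : Vᵀ.mulVec v = Pi.single i 1 := by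
      rw [hvdef, Matrix.mulVec_mulVec, hV, Matrix.one_mulVec]
    have hvne : v ≠ 0 := by
      intro h
      rw [h, Matrix.mulVec_zero] at hvz
      have := congr_fun hvz i
      simp at this
    have hpos := hP.dotProduct_mulVec_pos hvne
    have hstar : star v = v := by
      funext k; simp
    rw [hstar, hdot v, hvz] at hpos
    have hsum : ∑ k, lam k * ((Pi.single i 1 : Fin n → ℝ) k) ^ 2 = lam i := by
      rw [Finset.sum_eq_single i]
      · simp
      · intro k _ hk
        simp [Pi.single_eq_of_ne hk]
      · intro h; exact absurd (Finset.mem_univ i) h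
    rw [hsum] at hpos
    exact hpos
  have hlmin : 0 < lammin := by
    obtain ⟨i, hi⟩ := hex
    rw [← hi]; exact hlampos i
  -- transforming the primal image set
  have hsets : (fun x : Fin n → ℝ => -(x ⬝ᵥ x)) '' {x | (x - c) ⬝ᵥ P.mulVec (x - c) ≤ 1}
      = (fun y : Fin n → ℝ => -(∑ i, y i ^ 2)) '' {y | gfun lam cbar y ≤ 1} := by
    ext r
    constructor
    · rintro ⟨x, hx, rfl⟩
      refine ⟨Vᵀ.mulVec x, ?_, ?_⟩
      · show gfun lam cbar (Vᵀ.mulVec x) ≤ 1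
        rw [Set.mem_setOf_eq, hdot] at hx
        rw [gfun]
        have : ∀ i, (Vᵀ.mulVec (x - c)) i = (Vᵀ.mulVec x) i - cbar i := by
          intro i
          rw [Matrix.mulVec_sub, hcbar, Pi.sub_apply]
        calc ∑ i, lam i * ((Vᵀ.mulVec x) i - cbar i) ^ 2
            = ∑ i, lam i * ((Vᵀ.mulVec (x - c)) i) ^ 2 :=
              Finset.sum_congr rfl fun i _ => by rw [this i]
          _ ≤ 1 := hx
      · show -(∑ i, ((Vᵀ.mulVec x) i) ^ 2) = -(x ⬝ᵥ x)
        rw [hnorm]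
    · rintro ⟨y, hy, rfl⟩
      refine ⟨V.mulVec y, ?_, ?_⟩
      · have hyy : Vᵀ.mulVec (V.mulVec y) = y := by
          rw [Matrix.mulVec_mulVec, hV, Matrix.one_mulVec]
        rw [Set.mem_setOf_eq, hdot]
        have : ∀ i, (Vᵀ.mulVec (V.mulVec y - c)) i = y i - cbar i := by
          intro i
          rw [Matrix.mulVec_sub, hyy, hcbar, Pi.sub_apply]
        calc ∑ i, lam i * ((Vᵀ.mulVec (V.mulVec y - c)) i) ^ 2
            = ∑ i, lam i * (y i - cbar i) ^ 2 :=
              Finset.sum_congr rfl fun i _ => by rw [this i]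
          _ ≤ 1 := hy
      · show -(V.mulVec y ⬝ᵥ V.mulVec y) = -(∑ i, y i ^ 2)
        rw [hnorm, Matrix.mulVec_mulVec, hV, Matrix.one_mulVec]
  rw [hsets]
  exact main_y lam cbar lammin hlmin hmin hex
end
end

section
/- Let P ∈ ℝ^{n×n} be symmetric positive definite and c ∈ ℝⁿ, and let ℓ* := sup { ℓ_{c,P}(β) : β ∈ I_P }. Then E(c,P) is contained in the topological interior of B(0,1) (i.e., xᵀx < 1 for every x ∈ E(c,P)) if and only if ℓ* > −1. -/
open Matrix

noncomputable section

/-! ### Auxiliary definitions and lemmas -/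

open Classical in
/-- The support of `b`. -/
def fS {n : ℕ} (b : Fin n → ℝ) : Finset (Fin n) :=
  Finset.univ.filter (fun i => b i ≠ 0)

/-- The negation of the dual function. -/
def fval {n : ℕ} (lam b : Fin n → ℝ) (β : ℝ) : ℝ :=
  β + ∑ i ∈ fS b, b i ^ 2 * (lam i * β / (lam i * β - 1))

/-- The (negated) derivative-related function `g`. -/
def gval {n : ℕ} (lam b : Fin n → ℝ) (β : ℝ) : ℝ :=
  ∑ i ∈ fS b, b i ^ 2 * (lam i / (lam i * β - 1) ^ 2)

lemma ellFun_eq {n : ℕ} (lam b : Fin n → ℝ) (β : ℝ) :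
    ellFun lam b β = -fval lam b β := by
  simp [ellFun, fval, fS]; ring

lemma mem_fS {n : ℕ} {b : Fin n → ℝ} {i : Fin n} : i ∈ fS b ↔ b i ≠ 0 := by
  simp [fS]

lemma interior_unitBall {n : ℕ} :
    interior {x : Fin n → ℝ | x ⬝ᵥ x ≤ 1} = {x : Fin n → ℝ | x ⬝ᵥ x < 1} := by
  apply subset_antisymm
  · intro x hx
    have hle : x ⬝ᵥ x ≤ 1 := (interior_subset hx : x ∈ {x : Fin n → ℝ | x ⬝ᵥ x ≤ 1})
    show x ⬝ᵥ x < 1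
    by_contra hlt
    push_neg at hlt
    have hxx : x ⬝ᵥ x = 1 := le_antisymm hle hlt
    obtain ⟨ε, hε, hball⟩ := Metric.isOpen_iff.mp isOpen_interior x hx
    set δ : ℝ := min (ε / (2 * (‖x‖ + 1))) 1 with hδdef
    have hxnorm : (0:ℝ) < ‖x‖ + 1 := by positivity
    have hδpos : 0 < δ := by
      apply lt_min _ one_pos
      positivity
    have hmem : (1 + δ) • x ∈ Metric.ball x ε := by
      rw [Metric.mem_ball, dist_eq_norm]
      have : (1 + δ) • x - x = δ • x := by
        rw [add_smul, one_smul]; abel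
      rw [this, norm_smul, Real.norm_eq_abs, abs_of_pos hδpos]
      calc δ * ‖x‖ ≤ (ε / (2 * (‖x‖ + 1))) * (‖x‖ + 1) := by
            apply mul_le_mul (min_le_left _ _) (by linarith [norm_nonneg x]) (norm_nonneg x)
            positivity
        _ = ε / 2 := by field_simp
        _ < ε := by linarith
    have hmem2 : ((1 + δ) • x) ⬝ᵥ ((1 + δ) • x) ≤ 1 :=
      (interior_subset (hball hmem) : _ ∈ {x : Fin n → ℝ | x ⬝ᵥ x ≤ 1})
    have heq : ((1 + δ) • x) ⬝ᵥ ((1 + δ) • x) = (1+δ)^2 := by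
      rw [smul_dotProduct, dotProduct_smul, hxx, smul_eq_mul, smul_eq_mul]; ring
    rw [heq] at hmem2
    nlinarith
  · have hopen : IsOpen {x : Fin n → ℝ | x ⬝ᵥ x < 1} := by
      have : Continuous (fun x : Fin n → ℝ => x ⬝ᵥ x) := by
        unfold dotProduct; continuity
      exact isOpen_lt this continuous_const
    exact interior_maximal (fun x hx => (le_of_lt hx : x ⬝ᵥ x ≤ 1)) hopen

section core
variable {n : ℕ} (lam b : Fin n → ℝ) {lammin : ℝ} (hpos : 0 < lammin)
  (hmin : ∀ i, lammin ≤ lam i)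

lemma dom_ge {β : ℝ} (hβ : β ∈ ellDom lam b lammin) : 1 / lammin ≤ β := by
  unfold ellDom at hβ
  split_ifs at hβ with h
  · exact le_of_lt hβ
  · exact hβ

include hpos in
lemma dom_pos {β : ℝ} (hβ : β ∈ ellDom lam b lammin) : 0 < β :=
  lt_of_lt_of_le (by positivity) (dom_ge lam b hβ)

include hpos hmin in
lemma dom_strict {β : ℝ} (hβ : β ∈ ellDom lam b lammin) :
    ∀ i, b i ≠ 0 → 1 < lam i * β := by
  intro i hi
  have hβge := dom_ge lam b hβ
  by_cases hli : lam i = lammin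
  · unfold ellDom at hβ
    rw [if_pos ⟨i, hi, hli⟩] at hβ
    have : 1 / lammin < β := hβ
    calc (1:ℝ) = lammin * (1/lammin) := by field_simp
    _ < lammin * β := by exact mul_lt_mul_of_pos_left this hpos
    _ = lam i * β := by rw [hli]
  · have h1 : lammin < lam i := lt_of_le_of_ne (hmin i) (Ne.symm hli)
    have hβpos : 0 < β := lt_of_lt_of_le (by positivity) hβge
    calc (1:ℝ) = lammin * (1/lammin) := by field_simp
    _ ≤ lammin * β := mul_le_mul_of_nonneg_left hβge (le_of_lt hpos)
    _ < lam i * β := mul_lt_mul_of_pos_right h1 hβpos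

include hpos hmin in
lemma dom_ge_one {β : ℝ} (hβ : β ∈ ellDom lam b lammin) :
    ∀ i, 1 ≤ lam i * β := by
  intro i
  have hβge := dom_ge lam b hβ
  calc (1:ℝ) = lammin * (1/lammin) := by field_simp
  _ ≤ lam i * β := by
      apply mul_le_mul (hmin i) hβge (by positivity) (le_trans (le_of_lt hpos) (hmin i))

include hpos hmin in
lemma fval_ge {β : ℝ} (hβ : β ∈ ellDom lam b lammin) : β ≤ fval lam b β := by
  have hstrict := dom_strict lam b hpos hmin hβ
  have : 0 ≤ ∑ i ∈ fS b, b i ^ 2 * (lam i * β / (lam i * β - 1)) := by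
    apply Finset.sum_nonneg
    intro i hi
    have h1 := hstrict i (mem_fS.mp hi)
    have : 0 ≤ lam i * β / (lam i * β - 1) := by
      apply div_nonneg <;> linarith
    positivity
  rw [fval]; linarith

-- weak duality
include hpos hmin in
lemma weak {β : ℝ} (hβ : β ∈ ellDom lam b lammin) (hf : fval lam b β < 1)
    (y : Fin n → ℝ) (hy : ∑ i, lam i * (y i - b i) ^ 2 ≤ 1) :
    ∑ i, (y i) ^ 2 < 1 := by
  classical
  have hβpos := dom_pos lam b hpos hβ
  have hstrict := dom_strict lam b hpos hmin hβ
  have hge1 := dom_ge_one lam b hpos hmin hβ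
  have hcoord : ∀ i, (y i) ^ 2 ≤ β * (lam i * (y i - b i) ^ 2) +
      (if b i ≠ 0 then b i ^ 2 * (lam i * β / (lam i * β - 1)) else 0) := by
    intro i
    by_cases hbi : b i ≠ 0
    · rw [if_pos hbi]
      set L := lam i * β with hL
      have hL1 : 1 < L := hstrict i hbi
      have hβlam : β * lam i = L := by rw [hL]; ring
      have key : ((y i) ^ 2 - L * (y i - b i) ^ 2) * (L - 1) ≤ b i ^ 2 * L := by
        nlinarith [sq_nonneg ((L - 1) * y i - L * b i)]
      have h2 : (y i) ^ 2 - L * (y i - b i) ^ 2 ≤ b i ^ 2 * L / (L - 1) := by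
        rw [le_div_iff₀ (by linarith)]; exact key
      have h3 : b i ^ 2 * (L / (L - 1)) = b i ^ 2 * L / (L - 1) := by ring
      rw [h3]
      nlinarith
    · rw [if_neg hbi]
      push_neg at hbi
      rw [hbi]
      have : 1 ≤ lam i * β := hge1 i
      nlinarith [sq_nonneg (y i)]
  calc ∑ i, (y i) ^ 2
      ≤ ∑ i, (β * (lam i * (y i - b i) ^ 2) +
        (if b i ≠ 0 then b i ^ 2 * (lam i * β / (lam i * β - 1)) else 0)) :=
        Finset.sum_le_sum (fun i _ => hcoord i)
    _ = β * (∑ i, lam i * (y i - b i) ^ 2) +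
        ∑ i ∈ fS b, b i ^ 2 * (lam i * β / (lam i * β - 1)) := by
        rw [Finset.sum_add_distrib, ← Finset.mul_sum, fS, Finset.sum_filter]
    _ ≤ β * 1 + ∑ i ∈ fS b, b i ^ 2 * (lam i * β / (lam i * β - 1)) := by
        have := mul_le_mul_of_nonneg_left hy (le_of_lt hβpos)
        linarith
    _ < 1 := by
        have : fval lam b β = β + ∑ i ∈ fS b, b i ^ 2 * (lam i * β / (lam i * β - 1)) := rfl
        linarith [hf, this ▸ hf]

end core

section constr
variable {n : ℕ} (lam b : Fin n → ℝ) {β : ℝ} (hβpos : 0 < β)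
  (hstrict : ∀ i, b i ≠ 0 → 1 < lam i * β)

open Classical in
/-- The candidate maximizer on the support of `b`. -/
def y0 (lam b : Fin n → ℝ) (β : ℝ) : Fin n → ℝ :=
  fun i => if b i ≠ 0 then lam i * β * b i / (lam i * β - 1) else 0

include hstrict in
lemma y0_constraint : ∑ i, lam i * (y0 lam b β i - b i) ^ 2 = gval lam b β := by
  classical
  rw [gval, fS, Finset.sum_filter]
  apply Finset.sum_congr rfl
  intro i _
  by_cases hbi : b i ≠ 0
  · rw [if_pos hbi]
    have h1 := hstrict i hbi
    have hne : lam i * β - 1 ≠ 0 := by linarith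
    rw [y0, if_pos hbi]
    field_simp
    ring
  · rw [if_neg hbi, y0, if_neg hbi]
    push_neg at hbi
    rw [hbi]
    ring

include hstrict in
lemma y0_norm : ∑ i, (y0 lam b β i) ^ 2 =
    (fval lam b β - β) + β * gval lam b β := by
  classical
  have h1 : fval lam b β - β = ∑ i ∈ fS b, b i ^ 2 * (lam i * β / (lam i * β - 1)) := by
    rw [fval]; ring
  rw [h1, gval, Finset.mul_sum, ← Finset.sum_add_distrib]
  rw [← Finset.sum_filter_add_sum_filter_not Finset.univ (fun i => b i ≠ 0) (fun i => (y0 lam b β i)^2)]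
  have h2 : ∑ i ∈ Finset.univ.filter (fun i => ¬ b i ≠ 0), (y0 lam b β i) ^ 2 = 0 := by
    apply Finset.sum_eq_zero
    intro i hi
    rw [Finset.mem_filter] at hi
    rw [y0, if_neg hi.2]
    ring
  rw [h2, add_zero]
  apply Finset.sum_congr rfl
  intro i hi
  rw [Finset.mem_filter] at hi
  have hbi := hi.2
  have hL := hstrict i hbi
  have hne : lam i * β - 1 ≠ 0 := by linarith
  rw [y0, if_pos hbi]
  field_simp
  ring

include hβpos hstrict in
lemma construct_interior (hg : gval lam b β = 1) (hf : 1 ≤ fval lam b β) :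
    ∃ y : Fin n → ℝ, ∑ i, lam i * (y i - b i) ^ 2 ≤ 1 ∧ 1 ≤ ∑ i, (y i) ^ 2 := by
  refine ⟨y0 lam b β, ?_, ?_⟩
  · rw [y0_constraint lam b hstrict, hg]
  · rw [y0_norm lam b hstrict, hg]
    linarith

include hβpos hstrict in
lemma construct_endpoint (hg : gval lam b β ≤ 1) (hf : 1 ≤ fval lam b β)
    (j : Fin n) (hbj : b j = 0) (hlj : lam j * β ≤ 1) :
    ∃ y : Fin n → ℝ, ∑ i, lam i * (y i - b i) ^ 2 ≤ 1 ∧ 1 ≤ ∑ i, (y i) ^ 2 := by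
  classical
  set s : ℝ := 1 - gval lam b β with hs
  have hs0 : 0 ≤ s := by linarith
  set t : ℝ := Real.sqrt (β * s) with ht
  have ht2 : t ^ 2 = β * s := Real.sq_sqrt (by positivity)
  set y : Fin n → ℝ := Function.update (y0 lam b β) j t with hy
  have hyj : y j = t := by rw [hy]; simp
  have hyi : ∀ i, i ≠ j → y i = y0 lam b β i := by
    intro i hi; rw [hy, Function.update_of_ne hi]
  have hy0j : y0 lam b β j = 0 := by rw [y0, if_neg (by simpa using hbj)]
  refine ⟨y, ?_, ?_⟩
  · have split : ∑ i, lam i * (y i - b i) ^ 2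
        = ∑ i ∈ Finset.univ.erase j, lam i * (y i - b i) ^ 2 + lam j * (y j - b j) ^ 2 := by
      rw [Finset.sum_erase_add _ _ (Finset.mem_univ j)]
    have split0 : ∑ i, lam i * (y0 lam b β i - b i) ^ 2
        = ∑ i ∈ Finset.univ.erase j, lam i * (y0 lam b β i - b i) ^ 2
          + lam j * (y0 lam b β j - b j) ^ 2 := by
      rw [Finset.sum_erase_add _ _ (Finset.mem_univ j)]
    have hsame : ∑ i ∈ Finset.univ.erase j, lam i * (y i - b i) ^ 2
        = ∑ i ∈ Finset.univ.erase j, lam i * (y0 lam b β i - b i) ^ 2 := by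
      apply Finset.sum_congr rfl
      intro i hi
      rw [hyi i (Finset.ne_of_mem_erase hi)]
    have hc := y0_constraint lam b hstrict
    have hterm : lam j * (y j - b j) ^ 2 = lam j * β * s := by
      rw [hyj, hbj, sub_zero, ht2]; ring
    have hterm0 : lam j * (y0 lam b β j - b j) ^ 2 = 0 := by
      rw [hy0j, hbj]; ring
    have : ∑ i, lam i * (y i - b i) ^ 2 = gval lam b β + lam j * β * s := by
      rw [split, hsame, ← hterm]
      rw [split0, hterm0, add_zero] at hc
      rw [hc]
    rw [this]
    have : lam j * β * s ≤ s := by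
      nlinarith
    linarith
  · have split : ∑ i, (y i) ^ 2
        = ∑ i ∈ Finset.univ.erase j, (y i) ^ 2 + (y j) ^ 2 := by
      rw [Finset.sum_erase_add _ _ (Finset.mem_univ j)]
    have split0 : ∑ i, (y0 lam b β i) ^ 2
        = ∑ i ∈ Finset.univ.erase j, (y0 lam b β i) ^ 2 + (y0 lam b β j) ^ 2 := by
      rw [Finset.sum_erase_add _ _ (Finset.mem_univ j)]
    have hsame : ∑ i ∈ Finset.univ.erase j, (y i) ^ 2
        = ∑ i ∈ Finset.univ.erase j, (y0 lam b β i) ^ 2 := by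
      apply Finset.sum_congr rfl
      intro i hi
      rw [hyi i (Finset.ne_of_mem_erase hi)]
    have hn := y0_norm lam b hstrict
    rw [split0, hy0j] at hn
    have : ∑ i, (y i) ^ 2 = (fval lam b β - β) + β * gval lam b β + β * s := by
      rw [split, hsame, hyj, ht2]
      nlinarith [hn]
    rw [this, hs]
    linarith
end constr

section strong
variable {n : ℕ} (lam b : Fin n → ℝ) {lammin : ℝ} (hpos : 0 < lammin)
  (hmin : ∀ i, lammin ≤ lam i) (hex : ∃ i, lam i = lammin)

lemma gval_continuousOn {s : Set ℝ} (hs : ∀ β ∈ s, ∀ i, b i ≠ 0 → lam i * β - 1 ≠ 0) :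
    ContinuousOn (gval lam b) s := by
  apply continuousOn_finset_sum
  intro i hi
  apply ContinuousOn.mul continuousOn_const
  apply ContinuousOn.div continuousOn_const
  · fun_prop
  · intro β hβ
    exact pow_ne_zero 2 (hs β hβ i (mem_fS.mp hi))

include hmin hpos hex in
lemma strong (H : ∀ β ∈ ellDom lam b lammin, 1 ≤ fval lam b β) :
    ∃ y : Fin n → ℝ, ∑ i, lam i * (y i - b i) ^ 2 ≤ 1 ∧ 1 ≤ ∑ i, (y i) ^ 2 := by
  classical
  set M : ℝ := ∑ i ∈ fS b, b i ^ 2 * lam i with hM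
  have hlampos : ∀ i, 0 < lam i := fun i => lt_of_lt_of_le hpos (hmin i)
  have hM0 : 0 ≤ M := Finset.sum_nonneg (fun i _ => mul_nonneg (sq_nonneg _) (le_of_lt (hlampos i)))
  set K : ℝ := max 1 (Real.sqrt M) with hK
  have hK1 : (1:ℝ) ≤ K := le_max_left _ _
  have hK0 : (0:ℝ) < K := lt_of_lt_of_le one_pos hK1
  have hKM : M ≤ K ^ 2 := by
    calc M = Real.sqrt M ^ 2 := (Real.sq_sqrt hM0).symm
    _ ≤ K ^ 2 := by
        apply pow_le_pow_left₀ (Real.sqrt_nonneg M) (le_max_right _ _)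
  set β₂ : ℝ := (1 + K) / lammin with hβ₂
  have hβ₂min : lammin * β₂ - 1 = K := by rw [hβ₂]; field_simp; ring
  have hβ₂gt : 1 / lammin < β₂ := by
    rw [hβ₂, div_lt_div_iff₀ hpos hpos]
    nlinarith
  have hβ₂pos : 0 < β₂ := lt_trans (by positivity) hβ₂gt
  have hdenom₂ : ∀ i, b i ≠ 0 → K ≤ lam i * β₂ - 1 := by
    intro i _
    have : lammin * β₂ ≤ lam i * β₂ := mul_le_mul_of_nonneg_right (hmin i) (le_of_lt hβ₂pos)
    linarith
  have hgβ₂ : gval lam b β₂ ≤ 1 := by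
    have hterm : ∀ i ∈ fS b, b i ^ 2 * (lam i / (lam i * β₂ - 1) ^ 2) ≤ b i ^ 2 * lam i / K ^ 2 := by
      intro i hi
      have hbi := mem_fS.mp hi
      have hd := hdenom₂ i hbi
      have hd0 : (0:ℝ) < lam i * β₂ - 1 := lt_of_lt_of_le hK0 hd
      rw [mul_div_assoc]
      apply mul_le_mul_of_nonneg_left _ (sq_nonneg (b i))
      apply div_le_div_of_nonneg_left (le_of_lt (hlampos i)) (by positivity)
      apply pow_le_pow_left₀ (le_of_lt hK0) hd
    calc gval lam b β₂ ≤ ∑ i ∈ fS b, b i ^ 2 * lam i / K ^ 2 :=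
          Finset.sum_le_sum hterm
    _ = M / K ^ 2 := by rw [← Finset.sum_div]
    _ ≤ 1 := by rw [div_le_one (by positivity)]; exact hKM
  by_cases hopen : ∃ i, b i ≠ 0 ∧ lam i = lammin
  · obtain ⟨i0, hbi0, hli0⟩ := hopen
    have hdom : ellDom lam b lammin = Set.Ioi (1 / lammin) := by
      rw [ellDom, if_pos ⟨i0, hbi0, hli0⟩]
    set t0 : ℝ := Real.sqrt (b i0 ^ 2 * lammin) with ht0
    have ht0pos : 0 < t0 := Real.sqrt_pos.mpr (by positivity)
    set δ : ℝ := min t0 1 with hδ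
    have hδpos : 0 < δ := lt_min ht0pos one_pos
    have hδ1 : δ ≤ 1 := min_le_right _ _
    set β₁ : ℝ := (1 + δ) / lammin with hβ₁
    have hβ₁min : lammin * β₁ - 1 = δ := by rw [hβ₁]; field_simp; ring
    have hβ₁gt : 1 / lammin < β₁ := by
      rw [hβ₁, div_lt_div_iff₀ hpos hpos]; nlinarith
    have hgβ₁ : 1 ≤ gval lam b β₁ := by
      have hi0S : i0 ∈ fS b := mem_fS.mpr hbi0
      have hsingle : b i0 ^ 2 * (lam i0 / (lam i0 * β₁ - 1) ^ 2) ≤ gval lam b β₁ := by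
        apply Finset.single_le_sum _ hi0S
        intro i _
        have := hlampos i
        positivity
      have hval : b i0 ^ 2 * (lam i0 / (lam i0 * β₁ - 1) ^ 2) = b i0 ^ 2 * lammin / δ ^ 2 := by
        rw [hli0, hβ₁min]; ring
      have hδt0 : δ ^ 2 ≤ b i0 ^ 2 * lammin := by
        calc δ ^ 2 ≤ t0 ^ 2 := pow_le_pow_left₀ (le_of_lt hδpos) (min_le_left _ _) 2
        _ = b i0 ^ 2 * lammin := Real.sq_sqrt (by positivity)
      have : 1 ≤ b i0 ^ 2 * lammin / δ ^ 2 := by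
        rw [le_div_iff₀ (by positivity)]; linarith
      rw [hval] at hsingle
      linarith
    have h1mem : (1:ℝ) ∈ Set.uIcc (gval lam b β₁) (gval lam b β₂) :=
      Set.mem_uIcc.mpr (Or.inr ⟨hgβ₂, hgβ₁⟩)
    have hcont : ContinuousOn (gval lam b) (Set.uIcc β₁ β₂) := by
      apply gval_continuousOn lam b
      intro β hβ i hbi
      have hβlb : min β₁ β₂ ≤ β := (Set.mem_uIcc.mp hβ).elim (fun h => le_trans (min_le_left _ _) h.1)
        (fun h => le_trans (min_le_right _ _) h.1)
      have h2 : 1 / lammin < β := lt_of_lt_of_le (lt_min hβ₁gt hβ₂gt) hβlb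
      have : 1 < lam i * β := by
        calc (1:ℝ) = lammin * (1 / lammin) := by field_simp
        _ ≤ lam i * (1/lammin) := mul_le_mul_of_nonneg_right (hmin i) (by positivity)
        _ < lam i * β := mul_lt_mul_of_pos_left h2 (hlampos i)
      linarith
    obtain ⟨β', hβ'mem, hβ'g⟩ := intermediate_value_uIcc hcont h1mem
    have hβ'gt : 1 / lammin < β' := by
      have hβlb : min β₁ β₂ ≤ β' := (Set.mem_uIcc.mp hβ'mem).elim (fun h => le_trans (min_le_left _ _) h.1)
        (fun h => le_trans (min_le_right _ _) h.1)
      exact lt_of_lt_of_le (lt_min hβ₁gt hβ₂gt) hβlb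
    have hβ'dom : β' ∈ ellDom lam b lammin := by rw [hdom]; exact hβ'gt
    have hβ'pos : 0 < β' := lt_trans (by positivity) hβ'gt
    have hstrict' : ∀ i, b i ≠ 0 → 1 < lam i * β' := by
      intro i _
      calc (1:ℝ) = lammin * (1 / lammin) := by field_simp
      _ ≤ lam i * (1/lammin) := mul_le_mul_of_nonneg_right (hmin i) (by positivity)
      _ < lam i * β' := mul_lt_mul_of_pos_left hβ'gt (hlampos i)
    exact construct_interior lam b hβ'pos hstrict' hβ'g (H β' hβ'dom)
  · have hdom : ellDom lam b lammin = Set.Ici (1 / lammin) := by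
      rw [ellDom, if_neg hopen]
    set β₀ : ℝ := 1 / lammin with hβ₀
    have hβ₀pos : 0 < β₀ := by positivity
    have hβ₀dom : β₀ ∈ ellDom lam b lammin := by rw [hdom]; exact Set.mem_Ici.mpr (le_refl _)
    have hstrict₀ : ∀ β'' , β₀ ≤ β'' → ∀ i, b i ≠ 0 → 1 < lam i * β'' := by
      intro β'' hβ'' i hbi
      have hne : lam i ≠ lammin := fun h => hopen ⟨i, hbi, h⟩
      have hlt : lammin < lam i := lt_of_le_of_ne (hmin i) (Ne.symm hne)
      calc (1:ℝ) = lammin * β₀ := by rw [hβ₀]; field_simp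
      _ < lam i * β₀ := mul_lt_mul_of_pos_right hlt hβ₀pos
      _ ≤ lam i * β'' := mul_le_mul_of_nonneg_left hβ'' (le_of_lt (hlampos i))
    by_cases hg0 : gval lam b β₀ ≤ 1
    · obtain ⟨j, hj⟩ := hex
      have hbj : b j = 0 := by
        by_contra hbj
        exact hopen ⟨j, hbj, hj⟩
      have hlj : lam j * β₀ ≤ 1 := by rw [hj, hβ₀]; field_simp; exact le_refl _
      exact construct_endpoint lam b hβ₀pos (hstrict₀ β₀ (le_refl _)) hg0 (H β₀ hβ₀dom) j hbj hlj
    · push_neg at hg0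
      have h1mem : (1:ℝ) ∈ Set.uIcc (gval lam b β₀) (gval lam b β₂) :=
        Set.mem_uIcc.mpr (Or.inr ⟨hgβ₂, le_of_lt hg0⟩)
      have hβ₀le₂ : β₀ ≤ β₂ := le_of_lt hβ₂gt
      have hcont : ContinuousOn (gval lam b) (Set.uIcc β₀ β₂) := by
        apply gval_continuousOn lam b
        intro β hβ i hbi
        have hβlb : β₀ ≤ β := by
          have := (Set.mem_uIcc.mp hβ).elim (fun h => le_trans (min_le_left _ _) h.1)
            (fun h => le_trans (min_le_right _ _) h.1)
          calc β₀ = min β₀ β₂ := (min_eq_left hβ₀le₂).symm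
          _ ≤ β := this
        have := hstrict₀ β hβlb i hbi
        linarith
      obtain ⟨β', hβ'mem, hβ'g⟩ := intermediate_value_uIcc hcont h1mem
      have hβ'ge : β₀ ≤ β' := by
        have := (Set.mem_uIcc.mp hβ'mem).elim (fun h => le_trans (min_le_left _ _) h.1)
          (fun h => le_trans (min_le_right _ _) h.1)
        calc β₀ = min β₀ β₂ := (min_eq_left hβ₀le₂).symm
        _ ≤ β' := this
      have hβ'dom : β' ∈ ellDom lam b lammin := by rw [hdom]; exact hβ'ge
      have hβ'pos : 0 < β' := lt_of_lt_of_le hβ₀pos hβ'ge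
      exact construct_interior lam b hβ'pos (hstrict₀ β' hβ'ge) hβ'g (H β' hβ'dom)
end strong

theorem stmt_11 {n : ℕ} (P V D : Matrix (Fin n) (Fin n) ℝ) (lam : Fin n → ℝ)
    (c : Fin n → ℝ) (hP : P.PosDef)
    (hV : Vᵀ * V = 1) (hD : D = Matrix.diagonal lam) (hdec : P = V * D * Vᵀ)
    (lammin : ℝ) (hmin : ∀ i, lammin ≤ lam i) (hex : ∃ i, lam i = lammin) :
    Ellipsoid c P ⊆ interior (UnitBall n) ↔
      sSup (ellFun lam (Vᵀ.mulVec c) '' ellDom lam (Vᵀ.mulVec c) lammin) > -1 := by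
  classical
  set b : Fin n → ℝ := Vᵀ.mulVec c with hb
  have hVVt : V * Vᵀ = 1 := mul_eq_one_comm.mp hV
  have quadform : ∀ w : Fin n → ℝ, w ⬝ᵥ P.mulVec w = ∑ i, lam i * ((Vᵀ.mulVec w) i) ^ 2 := by
    intro w
    rw [hdec, hD, mul_assoc, ← Matrix.mulVec_mulVec, Matrix.dotProduct_mulVec,
      Matrix.mulVec_transpose, ← Matrix.mulVec_mulVec, Matrix.mulVec_transpose]
    simp only [dotProduct, Matrix.mulVec_diagonal]
    apply Finset.sum_congr rfl
    intro i _
    ring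
  -- positivity of lammin
  have hpos : 0 < lammin := by
    obtain ⟨i0, hi0⟩ := hex
    set x0 : Fin n → ℝ := V.mulVec (Pi.single i0 1) with hx0def
    have hVx0 : Vᵀ.mulVec x0 = Pi.single i0 1 := by
      rw [hx0def, Matrix.mulVec_mulVec, hV, Matrix.one_mulVec]
    have hx0ne : x0 ≠ 0 := by
      intro h
      rw [h, Matrix.mulVec_zero] at hVx0
      have := congrFun hVx0 i0
      simp at this
    have hq := hP.dotProduct_mulVec_pos hx0ne
    simp only [star_trivial] at hq
    have hq2 : x0 ⬝ᵥ P.mulVec x0 = lam i0 := by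
      rw [quadform x0, hVx0]
      simp [Pi.single_apply]
    rw [hi0] at hq2
    rw [hq2] at hq
    exact_mod_cast hq
  -- LHS equivalence
  have hnorm : ∀ x : Fin n → ℝ, x ⬝ᵥ x = ∑ i, ((Vᵀ.mulVec x) i) ^ 2 := by
    intro x
    have h1 : (Vᵀ.mulVec x) ⬝ᵥ (Vᵀ.mulVec x) = x ⬝ᵥ x := by
      rw [Matrix.dotProduct_mulVec, Matrix.vecMul_transpose, Matrix.mulVec_mulVec,
        hVVt, Matrix.one_mulVec]
    rw [← h1, dotProduct]
    apply Finset.sum_congr rfl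
    intro i _
    ring
  have hquadE : ∀ x : Fin n → ℝ, (x - c) ⬝ᵥ P.mulVec (x - c)
      = ∑ i, lam i * ((Vᵀ.mulVec x) i - b i) ^ 2 := by
    intro x
    rw [quadform (x - c)]
    apply Finset.sum_congr rfl
    intro i _
    rw [Matrix.mulVec_sub]
    simp [hb]
  have hLHS : (Ellipsoid c P ⊆ interior (UnitBall n)) ↔
      (∀ y : Fin n → ℝ, ∑ i, lam i * (y i - b i) ^ 2 ≤ 1 → ∑ i, (y i) ^ 2 < 1) := by
    have hiu : interior (UnitBall n) = {x : Fin n → ℝ | x ⬝ᵥ x < 1} := interior_unitBall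
    constructor
    · intro h y hy
      set x : Fin n → ℝ := V.mulVec y with hxdef
      have hVx : Vᵀ.mulVec x = y := by
        rw [hxdef, Matrix.mulVec_mulVec, hV, Matrix.one_mulVec]
      have hxE : x ∈ Ellipsoid c P := by
        show (x - c) ⬝ᵥ P.mulVec (x - c) ≤ 1
        rw [hquadE x, hVx]
        exact hy
      have hxint := h hxE
      rw [hiu] at hxint
      have : x ⬝ᵥ x < 1 := hxint
      rw [hnorm x, hVx] at this
      exact this
    · intro h x hx
      rw [hiu]
      show x ⬝ᵥ x < 1
      rw [hnorm x]
      apply h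
      rw [← hquadE x]
      exact hx
  -- RHS equivalence
  have hdomne : (1 / lammin + 1) ∈ ellDom lam b lammin := by
    unfold ellDom
    split_ifs with h
    · exact Set.mem_Ioi.mpr (by linarith)
    · exact Set.mem_Ici.mpr (by linarith)
  have hbdd : BddAbove (ellFun lam b '' ellDom lam b lammin) := by
    refine ⟨0, ?_⟩
    rintro v ⟨β, hβ, rfl⟩
    rw [ellFun_eq]
    have h1 : 1 / lammin ≤ β := dom_ge lam b hβ
    have h2 : β ≤ fval lam b β := fval_ge lam b hpos hmin hβ
    have h3 : 0 < 1 / lammin := by positivity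
    linarith
  have hne : (ellFun lam b '' ellDom lam b lammin).Nonempty :=
    ⟨_, Set.mem_image_of_mem _ hdomne⟩
  have hRHS : (sSup (ellFun lam b '' ellDom lam b lammin) > -1) ↔
      ∃ β ∈ ellDom lam b lammin, fval lam b β < 1 := by
    rw [gt_iff_lt, lt_csSup_iff hbdd hne]
    constructor
    · rintro ⟨v, ⟨β, hβ, rfl⟩, hv⟩
      refine ⟨β, hβ, ?_⟩
      rw [ellFun_eq] at hv
      linarith
    · rintro ⟨β, hβ, hf⟩
      refine ⟨ellFun lam b β, Set.mem_image_of_mem _ hβ, ?_⟩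
      rw [ellFun_eq]
      linarith
  rw [hLHS, hRHS]
  constructor
  · intro h
    by_contra hno
    push_neg at hno
    obtain ⟨y, hy1, hy2⟩ := strong lam b hpos hmin hex (fun β hβ => hno β hβ)
    have := h y hy1
    linarith
  · rintro ⟨β, hβ, hf⟩ y hy
    exact weak lam b hpos hmin hβ hf y hy

end
end

section
/- Let P ∈ ℝ^{n×n} be symmetric positive definite and c ∈ ℝⁿ, and let ℓ* := sup { ℓ_{c,P}(β) : β ∈ I_P }. Then E(c,P) ⊆ B(0,1) together with ∂E(c,P) ∩ ∂B(0,1) ≠ ∅ (i.e., there exists x̄ with (x̄−c)ᵀ P (x̄−c) = 1 and x̄ᵀ x̄ = 1, and E(c,P) ⊆ B(0,1)) holds if and only if ℓ* = −1. -/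
open Matrix

noncomputable section

open Matrix Filter Set

section helpers
open Classical
variable {n : ℕ} {lam cbar : Fin n → ℝ} {lammin : ℝ}
  (hl : 0 < lammin) (hmin : ∀ i, lammin ≤ lam i)

include hl hmin in
lemma dom_facts {β : ℝ} (hβ : β ∈ ellDom lam cbar lammin) :
    1 / lammin ≤ β ∧ (∀ i, cbar i ≠ 0 → 1 < lam i * β) ∧ (∀ i, 1 ≤ lam i * β) := by
  have hβ' := hβ
  unfold ellDom at hβ'
  split_ifs at hβ' with h
  · have h1 : 1 / lammin < β := hβ'
    have h2 : 1 / lammin ≤ β := le_of_lt h1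
    refine ⟨h2, fun i _ => ?_, fun i => ?_⟩
    · have := hmin i
      have hld : (1:ℝ) < lammin * β := by
        rw [div_lt_iff₀ hl] at h1; nlinarith
      nlinarith
    · have := hmin i
      rw [div_le_iff₀ hl] at h2; nlinarith
  · have h2 : 1 / lammin ≤ β := hβ'
    have hall : ∀ i, 1 ≤ lam i * β := by
      intro i
      have := hmin i
      rw [div_le_iff₀ hl] at h2; nlinarith
    refine ⟨h2, fun i hc => ?_, hall⟩
    have hne : lam i ≠ lammin := fun he => h ⟨i, hc, he⟩
    have hlt : lammin < lam i := lt_of_le_of_ne (hmin i) (Ne.symm hne)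
    have hβpos : 0 < β := lt_of_lt_of_le (by positivity) h2
    rw [div_le_iff₀ hl] at h2
    nlinarith
lemma ellFun_eq_s12 (lam cbar : Fin n → ℝ) (β : ℝ) :
    ellFun lam cbar β = -β - ∑ i, (if cbar i ≠ 0 then
      (cbar i) ^ 2 * (lam i * β / (lam i * β - 1)) else 0) := by
  rw [ellFun, Finset.sum_filter]

lemma weak_duality {β : ℝ} (hβpos : 0 < β)
    (h1 : ∀ i, cbar i ≠ 0 → 1 < lam i * β) (h2 : ∀ i, 1 ≤ lam i * β)
    (y : Fin n → ℝ) (hy : ∑ i, lam i * (y i - cbar i) ^ 2 ≤ 1) :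
    ∑ i, (y i) ^ 2 ≤ -(ellFun lam cbar β) := by
  have key : ∀ i, (y i) ^ 2 - β * (lam i * (y i - cbar i) ^ 2) ≤
      (if cbar i ≠ 0 then (cbar i) ^ 2 * (lam i * β / (lam i * β - 1)) else 0) := by
    intro i
    by_cases hc : cbar i = 0
    · simp only [hc, ne_eq, not_true_eq_false, if_neg, not_false_iff, if_false]
      have := h2 i
      nlinarith [sq_nonneg (y i)]
    · rw [if_pos hc]
      have ha : 0 < lam i * β - 1 := by have := h1 i hc; linarith
      rw [mul_div_assoc'] -- c^2 * (x/y) = c^2 * x / y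
      rw [le_div_iff₀ ha]
      nlinarith [sq_nonneg ((lam i * β - 1) * y i - lam i * β * cbar i)]
  have hsum := Finset.sum_le_sum (fun i (_ : i ∈ Finset.univ) => key i)
  rw [ellFun_eq_s12]
  have e1 : ∑ i, ((y i) ^ 2 - β * (lam i * (y i - cbar i) ^ 2)) =
      ∑ i, (y i) ^ 2 - β * ∑ i, lam i * (y i - cbar i) ^ 2 := by
    rw [Finset.sum_sub_distrib, Finset.mul_sum]
  rw [e1] at hsum
  nlinarith
include hl hmin in
lemma ell_le_neg {β : ℝ} (hβ : 1 / lammin ≤ β) (h1 : ∀ i, cbar i ≠ 0 → 1 < lam i * β) :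
    ellFun lam cbar β ≤ -β := by
  rw [ellFun]
  have : (0:ℝ) ≤ ∑ i ∈ Finset.univ.filter (fun i => cbar i ≠ 0),
      (cbar i) ^ 2 * (lam i * β / (lam i * β - 1)) := by
    apply Finset.sum_nonneg
    intro i hi
    rw [Finset.mem_filter] at hi
    have h := h1 i hi.2
    have hβpos : 0 < β := lt_of_lt_of_le (by positivity) hβ
    have : 0 < lam i * β - 1 := by linarith
    positivity
  linarith

lemma ell_contOn {S : Set ℝ} (hS : ∀ β ∈ S, ∀ i, cbar i ≠ 0 → lam i * β - 1 ≠ 0) :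
    ContinuousOn (ellFun lam cbar) S := by
  have : ContinuousOn (fun β => ∑ i ∈ Finset.univ.filter (fun i => cbar i ≠ 0),
      (cbar i) ^ 2 * (lam i * β / (lam i * β - 1))) S := by
    apply continuousOn_finset_sum
    intro i hi
    rw [Finset.mem_filter] at hi
    apply ContinuousOn.mul continuousOn_const
    apply ContinuousOn.div
    · exact (continuous_const.mul continuous_id).continuousOn
    · exact ((continuous_const.mul continuous_id).sub continuous_const).continuousOn
    · intro β hβ; exact hS β hβ i hi.2
  exact (continuous_neg.continuousOn.sub this).congr (fun x _ => rfl)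

include hl hmin in
lemma ell_attain (hex : ∃ i, lam i = lammin) :
    ∃ β₀ ∈ ellDom lam cbar lammin, ∀ β ∈ ellDom lam cbar lammin,
      ellFun lam cbar β ≤ ellFun lam cbar β₀ := by
  set a := 1 / lammin with ha
  have hapos : 0 < a := by positivity
  have hgt : ∀ β : ℝ, a < β → ∀ i, 1 < lam i * β := by
    intro β hβ i
    have h1 : 1 < lammin * β := by
      rw [ha, div_lt_iff₀ hl] at hβ; linarith
    nlinarith [hmin i, hβ, hapos]
  have hge : ∀ β : ℝ, a ≤ β → ∀ i, 1 ≤ lam i * β := by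
    intro β hβ i
    have h1 : 1 ≤ lammin * β := by
      rw [ha, div_le_iff₀ hl] at hβ; linarith
    nlinarith [hmin i, hβ, hapos]
  by_cases hbad : ∃ i, cbar i ≠ 0 ∧ lam i = lammin
  · -- dom = Ioi a
    have hdom : ellDom lam cbar lammin = Set.Ioi a := by rw [ellDom, if_pos hbad]
    obtain ⟨j, hcj, hlj⟩ := hbad
    set β₁ := a + 1 with hβ₁
    have hβ₁dom : a < β₁ := by simp [hβ₁]
    set K := max 1 (-(ellFun lam cbar β₁) - a + 1) with hK
    have hKpos : (0:ℝ) < K := lt_of_lt_of_le one_pos (le_max_left _ _)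
    have hcj2 : 0 < cbar j ^ 2 := by positivity
    set δ := min 1 (cbar j ^ 2 / (lammin * K)) with hδ
    have hδpos : 0 < δ := lt_min one_pos (by positivity)
    have hδ1 : δ ≤ 1 := min_le_left _ _
    have hsmall : ∀ β : ℝ, a < β → β ≤ a + δ → ellFun lam cbar β < ellFun lam cbar β₁ := by
      intro β hβa hβδ
      have hβpos : 0 < β := lt_trans hapos hβa
      have hd : 0 < lammin * β - 1 := by
        have := hgt β hβa j; rw [hlj] at this; linarith
      have hdδ : lammin * β - 1 ≤ lammin * δ := by
        have h1 : lammin * β ≤ lammin * (a + δ) := by nlinarith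
        have haa : lammin * a = 1 := by rw [ha]; field_simp
        nlinarith
      have hsum : cbar j ^ 2 * (lam j * β / (lam j * β - 1)) ≤
          ∑ i ∈ Finset.univ.filter (fun i => cbar i ≠ 0),
            (cbar i) ^ 2 * (lam i * β / (lam i * β - 1)) := by
        apply Finset.single_le_sum (f := fun i => (cbar i) ^ 2 * (lam i * β / (lam i * β - 1)))
        · intro i hi
          have h := hgt β hβa i
          have : 0 < lam i * β - 1 := by linarith
          positivity
        · simp [hcj]
      have hterm : cbar j ^ 2 / (lammin * δ) ≤
          cbar j ^ 2 * (lam j * β / (lam j * β - 1)) := by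
        rw [hlj]
        calc cbar j ^ 2 / (lammin * δ) ≤ cbar j ^ 2 / (lammin * β - 1) := by
              apply div_le_div_of_nonneg_left (le_of_lt hcj2) hd hdδ
          _ ≤ cbar j ^ 2 * (lammin * β / (lammin * β - 1)) := by
              have h1 : 1 ≤ lammin * β := by linarith
              have e1 : lammin * β / (lammin * β - 1) = 1 + 1 / (lammin * β - 1) := by
                field_simp
                ring
              rw [e1, div_eq_mul_one_div (cbar j ^ 2)]
              nlinarith [sq_nonneg (cbar j)]
      have hKδ : K ≤ cbar j ^ 2 / (lammin * δ) := by
        have hδ2 : δ ≤ cbar j ^ 2 / (lammin * K) := min_le_right _ _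
        rw [le_div_iff₀ (by positivity)]
        rw [le_div_iff₀ (by positivity)] at hδ2
        nlinarith
      have hKbig : -(ellFun lam cbar β₁) - a + 1 ≤ K := le_max_right _ _
      have hup : ellFun lam cbar β ≤ -β - cbar j ^ 2 / (lammin * δ) := by
        rw [ellFun]
        have := le_trans hterm hsum
        linarith
      calc ellFun lam cbar β ≤ -β - cbar j ^ 2 / (lammin * δ) := hup
        _ ≤ -a - K := by linarith
        _ < ellFun lam cbar β₁ := by linarith
    -- compact max on [a+δ, T]
    set T := max (a + 1) (-(ellFun lam cbar β₁)) with hT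
    have hT1 : a + 1 ≤ T := le_max_left _ _
    have hcont : ContinuousOn (ellFun lam cbar) (Set.Icc (a + δ) T) := by
      apply ell_contOn
      intro β hβ i hci
      have : a < β := lt_of_lt_of_le (by linarith) hβ.1
      have := hgt β this i
      linarith
    obtain ⟨β₀, hβ₀mem, hβ₀max⟩ :=
      (isCompact_Icc).exists_isMaxOn ⟨β₁, ⟨by linarith, by linarith⟩⟩ hcont
    refine ⟨β₀, ?_, ?_⟩
    · rw [hdom]; exact lt_of_lt_of_le (by linarith) hβ₀mem.1
    · intro β hβ
      rw [hdom] at hβ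
      have hβa : a < β := hβ
      have hβ₁le : ellFun lam cbar β₁ ≤ ellFun lam cbar β₀ :=
        hβ₀max ⟨by linarith, by linarith⟩
      by_cases h1 : β ≤ a + δ
      · exact le_of_lt (lt_of_lt_of_le (hsmall β hβa h1) hβ₁le)
      · push_neg at h1
        by_cases h2 : β ≤ T
        · exact hβ₀max ⟨le_of_lt h1, h2⟩
        · push_neg at h2
          have hle : ellFun lam cbar β ≤ -β :=
            ell_le_neg hl hmin (le_of_lt hβa) (fun i hci => hgt β hβa i)
          have h3 : -(ellFun lam cbar β₁) ≤ T := le_max_right _ _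
          linarith
  · -- dom = Ici a
    have hdom : ellDom lam cbar lammin = Set.Ici a := by rw [ellDom, if_neg hbad]
    have hgtc : ∀ β : ℝ, a ≤ β → ∀ i, cbar i ≠ 0 → 1 < lam i * β := by
      intro β hβ i hci
      have hne : lam i ≠ lammin := fun he => hbad ⟨i, hci, he⟩
      have hlt : lammin < lam i := lt_of_le_of_ne (hmin i) (Ne.symm hne)
      have h2 : 1 ≤ lammin * β := by rw [ha, div_le_iff₀ hl] at hβ; linarith
      have hβpos : 0 < β := by nlinarith
      nlinarith
    set T := max (a + 1) (-(ellFun lam cbar a)) with hT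
    have hT1 : a + 1 ≤ T := le_max_left _ _
    have hcont : ContinuousOn (ellFun lam cbar) (Set.Icc a T) := by
      apply ell_contOn
      intro β hβ i hci
      have := hgtc β hβ.1 i hci
      linarith
    obtain ⟨β₀, hβ₀mem, hβ₀max⟩ :=
      (isCompact_Icc).exists_isMaxOn ⟨a, ⟨le_refl a, by linarith⟩⟩ hcont
    refine ⟨β₀, ?_, ?_⟩
    · rw [hdom]; exact hβ₀mem.1
    · intro β hβ
      rw [hdom] at hβ
      have hβa : a ≤ β := hβ
      have hale : ellFun lam cbar a ≤ ellFun lam cbar β₀ :=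
        hβ₀max ⟨le_refl a, by linarith⟩
      by_cases h2 : β ≤ T
      · exact hβ₀max ⟨hβa, h2⟩
      · push_neg at h2
        have hle : ellFun lam cbar β ≤ -β :=
          ell_le_neg hl hmin hβa (fun i hci => hgtc β hβa i hci)
        have : -(ellFun lam cbar a) ≤ T := le_max_right _ _
        linarith

include hl hmin in
lemma ell_deriv {β : ℝ} (hβ : ∀ i, cbar i ≠ 0 → 1 < lam i * β) :
    HasDerivAt (ellFun lam cbar)
      (-1 + ∑ i ∈ Finset.univ.filter (fun i => cbar i ≠ 0),
        (cbar i) ^ 2 * lam i / (lam i * β - 1) ^ 2) β := by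
  have h1 : HasDerivAt (fun β : ℝ => -β) (-1) β := (hasDerivAt_id β).neg
  have h2 : ∀ i ∈ Finset.univ.filter (fun i => cbar i ≠ 0),
      HasDerivAt (fun β => (cbar i) ^ 2 * (lam i * β / (lam i * β - 1)))
        (-((cbar i) ^ 2 * lam i / (lam i * β - 1) ^ 2)) β := by
    intro i hi
    rw [Finset.mem_filter] at hi
    have hne : lam i * β - 1 ≠ 0 := by have := hβ i hi.2; linarith
    have hnum : HasDerivAt (fun β : ℝ => lam i * β) (lam i) β := by
      simpa using (hasDerivAt_id β).const_mul (lam i)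
    have hden : HasDerivAt (fun β : ℝ => lam i * β - 1) (lam i) β := hnum.sub_const 1
    have hdiv := hnum.div hden hne
    have := hdiv.const_mul ((cbar i) ^ 2)
    refine this.congr_deriv ?_
    field_simp
    ring
  have hsum := HasDerivAt.sum h2
  have := h1.sub hsum
  have heq : (fun β : ℝ => -β - ∑ i ∈ Finset.univ.filter (fun i => cbar i ≠ 0),
      (cbar i) ^ 2 * (lam i * β / (lam i * β - 1))) = ellFun lam cbar := by
    funext β; rw [ellFun]
  simp only [Finset.sum_fn, Pi.sub_def] at this
  rw [heq] at this
  refine this.congr_deriv ?_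
  rw [Finset.sum_neg_distrib]
  ring

lemma construct_core {β₀ : ℝ} (hβpos : 0 < β₀)
    (hb2 : ∀ i, cbar i ≠ 0 → 1 < lam i * β₀)
    (hsle : ∑ i ∈ Finset.univ.filter (fun i => cbar i ≠ 0),
      (cbar i) ^ 2 * lam i / (lam i * β₀ - 1) ^ 2 ≤ 1)
    (hslack : (∑ i ∈ Finset.univ.filter (fun i => cbar i ≠ 0),
        (cbar i) ^ 2 * lam i / (lam i * β₀ - 1) ^ 2 = 1) ∨
      ∃ k, cbar k = 0 ∧ lam k * β₀ = 1) :
    ∃ y : Fin n → ℝ, ∑ i, lam i * (y i - cbar i) ^ 2 = 1 ∧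
      ∑ i, (y i) ^ 2 = -(ellFun lam cbar β₀) := by
  classical
  set s := ∑ i ∈ Finset.univ.filter (fun i => cbar i ≠ 0),
      (cbar i) ^ 2 * lam i / (lam i * β₀ - 1) ^ 2 with hs
  have hellval : -(ellFun lam cbar β₀) = β₀ + ∑ i ∈ Finset.univ.filter (fun i => cbar i ≠ 0),
      (cbar i) ^ 2 * (lam i * β₀ / (lam i * β₀ - 1)) := by
    rw [ellFun]; ring
  rcases hslack with hseq | ⟨k, hck, hlk⟩
  · -- s = 1, no slack needed
    refine ⟨fun i => if cbar i ≠ 0 then lam i * β₀ * cbar i / (lam i * β₀ - 1) else 0, ?_, ?_⟩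
    · have hg : ∀ i, lam i * ((if cbar i ≠ 0 then lam i * β₀ * cbar i / (lam i * β₀ - 1) else 0)
          - cbar i) ^ 2 = if cbar i ≠ 0 then (cbar i) ^ 2 * lam i / (lam i * β₀ - 1) ^ 2 else 0 := by
        intro i
        by_cases hc : cbar i = 0
        · simp [hc]
        · rw [if_pos hc, if_pos hc]
          have hne : lam i * β₀ - 1 ≠ 0 := by have := hb2 i hc; linarith
          field_simp
          ring
      calc ∑ i, lam i * ((if cbar i ≠ 0 then lam i * β₀ * cbar i / (lam i * β₀ - 1) else 0)
            - cbar i) ^ 2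
          = ∑ i, if cbar i ≠ 0 then (cbar i) ^ 2 * lam i / (lam i * β₀ - 1) ^ 2 else 0 :=
            Finset.sum_congr rfl (fun i _ => hg i)
        _ = s := by rw [hs, Finset.sum_filter]
        _ = 1 := hseq
    · have hq : ∀ i, ((if cbar i ≠ 0 then lam i * β₀ * cbar i / (lam i * β₀ - 1) else 0)) ^ 2 =
          if cbar i ≠ 0 then (cbar i) ^ 2 * (lam i * β₀ / (lam i * β₀ - 1))
            + β₀ * ((cbar i) ^ 2 * lam i / (lam i * β₀ - 1) ^ 2) else 0 := by
        intro i
        by_cases hc : cbar i = 0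
        · simp [hc]
        · rw [if_pos hc, if_pos hc]
          have hne : lam i * β₀ - 1 ≠ 0 := by have := hb2 i hc; linarith
          field_simp
          ring
      calc ∑ i, ((if cbar i ≠ 0 then lam i * β₀ * cbar i / (lam i * β₀ - 1) else 0)) ^ 2
          = ∑ i, if cbar i ≠ 0 then (cbar i) ^ 2 * (lam i * β₀ / (lam i * β₀ - 1))
              + β₀ * ((cbar i) ^ 2 * lam i / (lam i * β₀ - 1) ^ 2) else 0 :=
            Finset.sum_congr rfl (fun i _ => hq i)
        _ = ∑ i ∈ Finset.univ.filter (fun i => cbar i ≠ 0),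
            ((cbar i) ^ 2 * (lam i * β₀ / (lam i * β₀ - 1))
              + β₀ * ((cbar i) ^ 2 * lam i / (lam i * β₀ - 1) ^ 2)) := by
            rw [Finset.sum_filter]
        _ = (∑ i ∈ Finset.univ.filter (fun i => cbar i ≠ 0),
              (cbar i) ^ 2 * (lam i * β₀ / (lam i * β₀ - 1))) + β₀ * s := by
            rw [Finset.sum_add_distrib, hs, Finset.mul_sum]
        _ = -(ellFun lam cbar β₀) := by rw [hellval, hseq]; ring
  · -- slack at k
    have hsl : 0 ≤ (1 - s) * β₀ := mul_nonneg (by linarith) (le_of_lt hβpos)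
    set t := Real.sqrt ((1 - s) * β₀) with ht
    have ht2 : t ^ 2 = (1 - s) * β₀ := Real.sq_sqrt hsl
    refine ⟨fun i => if cbar i ≠ 0 then lam i * β₀ * cbar i / (lam i * β₀ - 1)
      else if i = k then t else 0, ?_, ?_⟩
    · have hg : ∀ i, lam i * ((if cbar i ≠ 0 then lam i * β₀ * cbar i / (lam i * β₀ - 1)
          else if i = k then t else 0) - cbar i) ^ 2 =
          if cbar i ≠ 0 then (cbar i) ^ 2 * lam i / (lam i * β₀ - 1) ^ 2
          else if i = k then 1 - s else 0 := by
        intro i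
        by_cases hc : cbar i = 0
        · by_cases hik : i = k
          · subst hik
            rw [if_neg (by simp [hc]), if_pos rfl, if_neg (by simp [hc]), if_pos rfl, hc]
            have := hlk
            rw [sub_zero, ht2]
            nlinarith [hlk]
          · simp [hc, hik]
        · rw [if_pos hc, if_pos hc]
          have hne : lam i * β₀ - 1 ≠ 0 := by have := hb2 i hc; linarith
          field_simp
          ring
      rw [Finset.sum_congr rfl (fun i _ => hg i), Finset.sum_ite, ← hs]
      have hk2 : ∑ i ∈ Finset.univ.filter (fun i => ¬cbar i ≠ 0),
          (if i = k then 1 - s else 0) = 1 - s := by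
        rw [Finset.sum_ite_eq' (Finset.univ.filter (fun i => ¬cbar i ≠ 0)) k (fun _ => 1 - s)]
        rw [if_pos (by simp [hck])]
      rw [hk2]
      ring
    · have hq : ∀ i, ((if cbar i ≠ 0 then lam i * β₀ * cbar i / (lam i * β₀ - 1)
          else if i = k then t else 0)) ^ 2 =
          if cbar i ≠ 0 then (cbar i) ^ 2 * (lam i * β₀ / (lam i * β₀ - 1))
            + β₀ * ((cbar i) ^ 2 * lam i / (lam i * β₀ - 1) ^ 2)
          else if i = k then (1 - s) * β₀ else 0 := by
        intro i
        by_cases hc : cbar i = 0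
        · by_cases hik : i = k
          · subst hik
            rw [if_neg (by simp [hc]), if_pos rfl, if_neg (by simp [hc]), if_pos rfl, ht2]
          · simp [hc, hik]
        · rw [if_pos hc, if_pos hc]
          have hne : lam i * β₀ - 1 ≠ 0 := by have := hb2 i hc; linarith
          field_simp
          ring
      rw [Finset.sum_congr rfl (fun i _ => hq i), Finset.sum_ite]
      have hk2 : ∑ i ∈ Finset.univ.filter (fun i => ¬cbar i ≠ 0),
          (if i = k then (1 - s) * β₀ else 0) = (1 - s) * β₀ := by
        rw [Finset.sum_ite_eq' (Finset.univ.filter (fun i => ¬cbar i ≠ 0)) k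
          (fun _ => (1 - s) * β₀)]
        rw [if_pos (by simp [hck])]
      rw [hk2, Finset.sum_add_distrib, ← Finset.mul_sum, ← hs, hellval]
      ring

include hl hmin in
lemma ell_construct (hex : ∃ i, lam i = lammin) {β₀ : ℝ}
    (hβ₀dom : β₀ ∈ ellDom lam cbar lammin)
    (hmax : ∀ β ∈ ellDom lam cbar lammin, ellFun lam cbar β ≤ ellFun lam cbar β₀) :
    ∃ y : Fin n → ℝ, ∑ i, lam i * (y i - cbar i) ^ 2 = 1 ∧
      ∑ i, (y i) ^ 2 = -(ellFun lam cbar β₀) := by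
  obtain ⟨hb1, hb2, hb3⟩ := dom_facts hl hmin hβ₀dom
  have hβpos : 0 < β₀ := lt_of_lt_of_le (by positivity) hb1
  set s := ∑ i ∈ Finset.univ.filter (fun i => cbar i ≠ 0),
      (cbar i) ^ 2 * lam i / (lam i * β₀ - 1) ^ 2 with hs
  have hd : HasDerivAt (ellFun lam cbar) (-1 + s) β₀ := ell_deriv hl hmin hb2
  rcases eq_or_lt_of_le hb1 with heq | hlt
  · -- endpoint case: β₀ = 1/lammin
    have hbad : ¬∃ i, cbar i ≠ 0 ∧ lam i = lammin := by
      intro hbad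
      rw [ellDom, if_pos hbad] at hβ₀dom
      exact lt_irrefl β₀ (heq ▸ (hβ₀dom : 1 / lammin < β₀))
    have hdom' : ellDom lam cbar lammin = Set.Ici (1 / lammin) := by
      rw [ellDom, if_neg hbad]
    have hdw : HasDerivWithinAt (ellFun lam cbar) (-1 + s) (Set.Ioi β₀) β₀ :=
      hd.hasDerivWithinAt
    rw [hasDerivWithinAt_iff_tendsto_slope' (notMem_Ioi.mpr (le_refl β₀))] at hdw
    have hnonpos : -1 + s ≤ 0 := by
      apply le_of_tendsto hdw
      filter_upwards [self_mem_nhdsWithin] with β hβ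
      have hβdom : β ∈ ellDom lam cbar lammin := by
        rw [hdom']; exact le_of_lt (show 1 / lammin < β by rw [heq]; exact hβ)
      have hle := hmax β hβdom
      rw [slope_def_field]
      apply div_nonpos_of_nonpos_of_nonneg
      · linarith
      · have : β₀ < β := hβ
        linarith
    obtain ⟨k, hk⟩ := hex
    have hck : cbar k = 0 := by
      by_contra h
      exact hbad ⟨k, h, hk⟩
    have hlk : lam k * β₀ = 1 := by
      rw [hk, ← heq]; field_simp
    exact construct_core hβpos hb2 (by linarith) (Or.inr ⟨k, hck, hlk⟩)
  · -- interior case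
    have hsub : Set.Ioi (1 / lammin) ⊆ ellDom lam cbar lammin := by
      rw [ellDom]; split_ifs
      · exact subset_rfl
      · exact Set.Ioi_subset_Ici_self
    have hloc : IsLocalMax (ellFun lam cbar) β₀ := by
      filter_upwards [Ioi_mem_nhds hlt] with β hβ
      exact hmax β (hsub hβ)
    have hz : deriv (ellFun lam cbar) β₀ = 0 := hloc.deriv_eq_zero
    rw [hd.deriv] at hz
    have hseq : s = 1 := by linarith
    exact construct_core hβpos hb2 (by linarith) (Or.inl hseq)

end helpers

theorem stmt_12 {n : ℕ} (P V D : Matrix (Fin n) (Fin n) ℝ) (lam : Fin n → ℝ)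
    (c : Fin n → ℝ) (hP : P.PosDef)
    (hV : Vᵀ * V = 1) (hD : D = Matrix.diagonal lam) (hdec : P = V * D * Vᵀ)
    (lammin : ℝ) (hmin : ∀ i, lammin ≤ lam i) (hex : ∃ i, lam i = lammin) :
    (Ellipsoid c P ⊆ UnitBall n ∧
        ∃ x : Fin n → ℝ, (x - c) ⬝ᵥ P.mulVec (x - c) = 1 ∧ x ⬝ᵥ x = 1) ↔
      sSup (ellFun lam (Vᵀ.mulVec c) '' ellDom lam (Vᵀ.mulVec c) lammin) = -1 := by
  classical
  set cbar := Vᵀ.mulVec c with hcbar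
  have hVVt : V * Vᵀ = 1 := mul_eq_one_comm.mp hV
  have hsurj : ∀ y : Fin n → ℝ, Vᵀ.mulVec (V.mulVec y) = y := by
    intro y
    rw [Matrix.mulVec_mulVec, hV, Matrix.one_mulVec]
  have hform : ∀ v : Fin n → ℝ, v ⬝ᵥ P.mulVec v = ∑ i, lam i * ((Vᵀ.mulVec v) i) ^ 2 := by
    intro v
    rw [hdec, hD]
    have h1 : (V * Matrix.diagonal lam * Vᵀ).mulVec v =
        V.mulVec ((Matrix.diagonal lam).mulVec (Vᵀ.mulVec v)) := by
      rw [Matrix.mulVec_mulVec, Matrix.mulVec_mulVec]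
    rw [h1, Matrix.dotProduct_mulVec, ← Matrix.mulVec_transpose]
    simp only [Matrix.mulVec_diagonal, dotProduct]
    exact Finset.sum_congr rfl (fun i _ => by ring)
  have hball : ∀ v : Fin n → ℝ, v ⬝ᵥ v = ∑ i, ((Vᵀ.mulVec v) i) ^ 2 := by
    intro v
    have h1 : ∑ i, ((Vᵀ.mulVec v) i) ^ 2 = (Vᵀ.mulVec v) ⬝ᵥ (Vᵀ.mulVec v) := by
      simp [dotProduct, sq]
    rw [h1, Matrix.dotProduct_mulVec, ← Matrix.mulVec_transpose, Matrix.transpose_transpose,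
      Matrix.mulVec_mulVec, hVVt, Matrix.one_mulVec]
  have hsubv : ∀ x : Fin n → ℝ, Vᵀ.mulVec (x - c) = Vᵀ.mulVec x - cbar := by
    intro x; rw [Matrix.mulVec_sub, hcbar]
  -- lammin > 0
  have hl : 0 < lammin := by
    obtain ⟨i0, hi0⟩ := hex
    set x0 := V.mulVec (Pi.single i0 1) with hx0def
    have hz : Vᵀ.mulVec x0 = Pi.single i0 1 := hsurj _
    have hx0 : x0 ≠ 0 := by
      intro h
      have := congrFun hz i0
      rw [h, Matrix.mulVec_zero] at this
      simp at this
    have hpos := hP.dotProduct_mulVec_pos hx0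
    have hstar : star x0 = x0 := by simp
    rw [hstar] at hpos
    rw [hform x0, hz] at hpos
    have : ∑ i, lam i * ((Pi.single i0 1 : Fin n → ℝ) i) ^ 2 = lam i0 := by
      rw [Finset.sum_eq_single i0]
      · simp
      · intro i _ hne; simp [Pi.single_apply, hne]
      · simp
    rw [this, hi0] at hpos
    exact hpos
  obtain ⟨β₀, hβ₀dom, hβ₀max⟩ := ell_attain hl hmin hex (cbar := cbar)
  obtain ⟨hb1, hb2, hb3⟩ := dom_facts hl hmin hβ₀dom
  have hβpos : 0 < β₀ := lt_of_lt_of_le (by positivity) hb1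
  have hgr : IsGreatest (ellFun lam cbar '' ellDom lam cbar lammin) (ellFun lam cbar β₀) := by
    constructor
    · exact ⟨β₀, hβ₀dom, rfl⟩
    · rintro b ⟨β, hβ, rfl⟩
      exact hβ₀max β hβ
  have hsup : sSup (ellFun lam cbar '' ellDom lam cbar lammin) = ellFun lam cbar β₀ :=
    hgr.csSup_eq
  rw [hsup]
  constructor
  · rintro ⟨hsubset, xb, hx1, hx2⟩
    -- upper bound: ℓ β₀ ≤ -1
    have hgx : ∑ i, lam i * ((Vᵀ.mulVec xb) i - cbar i) ^ 2 = 1 := by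
      have := hform (xb - c)
      rw [hx1, hsubv] at this
      simp only [Pi.sub_apply] at this
      exact this.symm
    have hqx : ∑ i, ((Vᵀ.mulVec xb) i) ^ 2 = 1 := by rw [← hball xb]; exact hx2
    have h1 : (1:ℝ) ≤ -(ellFun lam cbar β₀) := by
      have := weak_duality hβpos hb2 hb3 (Vᵀ.mulVec xb) (le_of_eq hgx)
      rw [hqx] at this
      exact this
    -- lower bound via construction
    obtain ⟨y, hy1, hy2⟩ := ell_construct hl hmin hex hβ₀dom hβ₀max
    set x := V.mulVec y with hx
    have hyx : Vᵀ.mulVec x = y := hsurj y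
    have hxe : x ∈ Ellipsoid c P := by
      show (x - c) ⬝ᵥ P.mulVec (x - c) ≤ 1
      rw [hform (x - c), hsubv, hyx]
      simp only [Pi.sub_apply]
      rw [hy1]
    have hxb := hsubset hxe
    have hxx : x ⬝ᵥ x = -(ellFun lam cbar β₀) := by
      rw [hball x, hyx]; exact hy2
    have h2 : -(ellFun lam cbar β₀) ≤ 1 := by rw [← hxx]; exact hxb
    linarith
  · intro hval
    constructor
    · intro x hx
      have hgx : ∑ i, lam i * ((Vᵀ.mulVec x) i - cbar i) ^ 2 ≤ 1 := by
        have := hform (x - c)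
        rw [hsubv] at this
        simp only [Pi.sub_apply] at this
        rw [← this]
        exact hx
      have := weak_duality hβpos hb2 hb3 (Vᵀ.mulVec x) hgx
      rw [hval] at this
      show x ⬝ᵥ x ≤ 1
      rw [hball x]
      linarith
    · obtain ⟨y, hy1, hy2⟩ := ell_construct hl hmin hex hβ₀dom hβ₀max
      refine ⟨V.mulVec y, ?_, ?_⟩
      · rw [hform, hsubv, hsurj]
        simp only [Pi.sub_apply]
        rw [hy1]
      · rw [hball, hsurj, hy2, hval]
        ring
end
end

section
/- Let P ∈ ℝ^{n×n} be symmetric positive definite and c ∈ ℝⁿ. Then E(c,P) ⊆ B(0,1) if and only if there exists β ≥ 0 such that for all x ∈ ℝⁿ, −xᵀx + β((x−c)ᵀ P (x−c) − 1) ≥ −1. -/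
open Matrix

noncomputable section

section SProcedureAux
open Finset Filter

private lemma verify {n : ℕ} (d b : Fin n → ℝ) (γ β : ℝ)
    (hβd : ∀ i, 0 ≤ β * d i - 1)
    (hb0 : ∀ i, β * d i - 1 = 0 → b i = 0)
    (hΨ : (∑ i, b i ^ 2 / (β * d i - 1)) + γ + β ≤ 0) :
    ∀ y : Fin n → ℝ, (∑ i, y i ^ 2) + 2 * (∑ i, b i * y i) + γ ≤
      β * ((∑ i, d i * y i ^ 2) - 1) := by
  intro y
  have per : ∀ i : Fin n, y i ^ 2 + 2 * (b i * y i) - β * (d i * y i ^ 2)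
      ≤ b i ^ 2 / (β * d i - 1) := by
    intro i
    rcases (hβd i).eq_or_lt with he | he
    · have hb := hb0 i he.symm
      rw [hb]
      have : β * d i = 1 := by linarith
      rw [← he]
      simp [div_zero]
      nlinarith [sq_nonneg (y i)]
    · rw [le_div_iff₀ he]
      nlinarith [sq_nonneg ((β * d i - 1) * y i - b i)]
  have hsum := Finset.sum_le_sum (fun i (_ : i ∈ Finset.univ) => per i)
  simp only [Finset.sum_sub_distrib, Finset.sum_add_distrib, ← Finset.mul_sum] at hsum
  linarith

private lemma perid (β dd bb : ℝ) (h : β * dd - 1 = 0 → bb = 0) :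
    bb ^ 2 / (β * dd - 1) + β * (dd * bb ^ 2 / (β * dd - 1) ^ 2)
      = (bb / (β * dd - 1)) ^ 2 + 2 * (bb * (bb / (β * dd - 1))) := by
  rcases eq_or_ne (β * dd - 1) 0 with he | he
  · rw [h he, he]; simp
  · field_simp; ring

private lemma sumid {n : ℕ} (d b : Fin n → ℝ) (β : ℝ)
    (hb0 : ∀ i, β * d i - 1 = 0 → b i = 0) :
    (∑ i, b i ^ 2 / (β * d i - 1))
      + β * (∑ i, d i * b i ^ 2 / (β * d i - 1) ^ 2)
      = ∑ i, ((b i / (β * d i - 1)) ^ 2 + 2 * (b i * (b i / (β * d i - 1)))) := by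
  rw [Finset.mul_sum, ← Finset.sum_add_distrib]
  exact Finset.sum_congr rfl fun i _ => perid β (d i) (b i) (hb0 i)

private lemma caseB_psi {n : ℕ} (d b : Fin n → ℝ) (γ : ℝ) (j₀ : Fin n)
    (hd : ∀ i, 0 < d i)
    (H : ∀ y : Fin n → ℝ, (∑ i, d i * y i ^ 2) ≤ 1 →
      (∑ i, y i ^ 2) + 2 * (∑ i, b i * y i) + γ ≤ 0)
    (hb0 : ∀ i, (1 / d j₀) * d i - 1 = 0 → b i = 0)
    (hσ1 : (∑ i, d i * b i ^ 2 / ((1 / d j₀) * d i - 1) ^ 2) ≤ 1) :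
    (∑ i, b i ^ 2 / ((1 / d j₀) * d i - 1)) + γ + (1 / d j₀) ≤ 0 := by
  have hdm : 0 < d j₀ := hd j₀
  set β₀ : ℝ := 1 / d j₀ with hβ₀_def
  set σ : ℝ := ∑ i, d i * b i ^ 2 / (β₀ * d i - 1) ^ 2 with hσ_def
  have hej₀ : β₀ * d j₀ - 1 = 0 := by
    rw [hβ₀_def, one_div_mul_cancel hdm.ne', sub_self]
  have hbj₀ : b j₀ = 0 := hb0 j₀ hej₀
  set z : Fin n → ℝ := fun i => b i / (β₀ * d i - 1) with hz
  have hzj₀ : z j₀ = 0 := by rw [hz]; simp [hbj₀]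
  set v : ℝ := Real.sqrt ((1 - σ) / d j₀) with hv
  have hv2 : v ^ 2 = (1 - σ) / d j₀ :=
    Real.sq_sqrt (div_nonneg (by linarith) hdm.le)
  set y : Fin n → ℝ := Function.update z j₀ v with hy
  have split : ∀ g : Fin n → ℝ → ℝ,
      (∑ i, g i (y i)) = g j₀ v + ∑ i ∈ Finset.univ.erase j₀, g i (z i) := by
    intro g
    rw [← Finset.add_sum_erase _ (fun i => g i (y i)) (Finset.mem_univ j₀)]
    congr 1
    · rw [hy, Function.update_self]
    · exact Finset.sum_congr rfl fun i hi => by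
        rw [hy, Function.update_of_ne (Finset.ne_of_mem_erase hi)]
  have eraseuniv : ∀ g : Fin n → ℝ → ℝ, g j₀ (z j₀) = 0 →
      (∑ i ∈ Finset.univ.erase j₀, g i (z i)) = ∑ i, g i (z i) :=
    fun g hg => Finset.sum_erase _ hg
  have hdz : (∑ i, d i * z i ^ 2) = σ := by
    rw [hσ_def]
    exact Finset.sum_congr rfl fun i _ => by
      simp only [hz]; rw [div_pow, mul_div_assoc]
  have sum1 : (∑ i, d i * y i ^ 2) = 1 := by
    rw [split (fun i t => d i * t ^ 2),
      eraseuniv (fun i t => d i * t ^ 2) (by rw [hzj₀]; ring), hdz, hv2]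
    field_simp
    ring
  have hF := H y sum1.le
  have hy2 : (∑ i, y i ^ 2) = v ^ 2 + ∑ i, z i ^ 2 := by
    rw [split (fun i t => t ^ 2), eraseuniv (fun i t => t ^ 2) (by rw [hzj₀]; ring)]
  have hby : (∑ i, b i * y i) = ∑ i, b i * z i := by
    rw [split (fun i t => b i * t), eraseuniv (fun i t => b i * t) (by rw [hzj₀]; ring),
      hbj₀, zero_mul, zero_add]
  have hid : (∑ i, b i ^ 2 / (β₀ * d i - 1)) + β₀ * σ
      = (∑ i, z i ^ 2) + 2 * ∑ i, b i * z i := by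
    rw [hσ_def]
    simp only [hz]
    rw [sumid d b β₀ hb0, Finset.sum_add_distrib, ← Finset.mul_sum]
  have hvβ : v ^ 2 = β₀ * (1 - σ) := by rw [hv2, hβ₀_def]; ring
  rw [hy2, hby] at hF
  linarith [hF, hid, hvβ]

private lemma caseA_psi {n : ℕ} (d b : Fin n → ℝ) (γ : ℝ)
    (H : ∀ y : Fin n → ℝ, (∑ i, d i * y i ^ 2) ≤ 1 →
      (∑ i, y i ^ 2) + 2 * (∑ i, b i * y i) + γ ≤ 0)
    (β : ℝ) (hβd : ∀ i, β * d i - 1 ≠ 0)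
    (hhβ : (∑ i, d i * b i ^ 2 / (β * d i - 1) ^ 2) = 1) :
    (∑ i, b i ^ 2 / (β * d i - 1)) + γ + β ≤ 0 := by
  set z : Fin n → ℝ := fun i => b i / (β * d i - 1) with hz
  have sum1 : (∑ i, d i * z i ^ 2) = 1 := by
    rw [← hhβ]
    exact Finset.sum_congr rfl fun i _ => by rw [hz, div_pow, mul_div_assoc]
  have hF := H z sum1.le
  have hid := sumid d b β (fun i he => absurd he (hβd i))
  rw [hhβ, mul_one, Finset.sum_add_distrib] at hid
  have : (∑ i, 2 * (b i * z i)) = 2 * (∑ i, b i * z i) := by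
    rw [Finset.mul_sum]
  rw [this] at hid
  have hzz : (∑ i, z i ^ 2) = ∑ i, (b i / (β * d i - 1)) ^ 2 := rfl
  have hbz : (∑ i, b i * z i) = ∑ i, b i * (b i / (β * d i - 1)) := rfl
  linarith [hid, hF]

private lemma stepB1 {n : ℕ} (d b : Fin n → ℝ) (j₀ : Fin n) (hd : ∀ i, 0 < d i)
    (hlt : ∀ β : ℝ, 1 / d j₀ < β → (∑ i, d i * b i ^ 2 / (β * d i - 1) ^ 2) < 1) :
    ∀ i, (1 / d j₀) * d i - 1 = 0 → b i = 0 := by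
  intro j he
  by_contra hb
  have hdj := hd j
  set δ : ℝ := |b j| / Real.sqrt (d j) with hδ
  have hδpos : 0 < δ := div_pos (abs_pos.mpr hb) (Real.sqrt_pos.mpr hdj)
  have hδ2 : δ ^ 2 = b j ^ 2 / d j := by
    rw [hδ, div_pow, sq_abs, Real.sq_sqrt hdj.le]
  set β : ℝ := 1 / d j₀ + δ with hβ
  have hβgt : 1 / d j₀ < β := by rw [hβ]; linarith
  have hterm : d j * b j ^ 2 / (β * d j - 1) ^ 2 = 1 := by
    have h1 : β * d j - 1 = δ * d j := by rw [hβ]; linarith [he]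
    rw [h1, mul_pow, hδ2]
    field_simp
  have hge : d j * b j ^ 2 / (β * d j - 1) ^ 2 ≤ ∑ i, d i * b i ^ 2 / (β * d i - 1) ^ 2 :=
    Finset.single_le_sum
      (f := fun i => d i * b i ^ 2 / (β * d i - 1) ^ 2)
      (fun i _ => by have := (hd i).le; positivity) (Finset.mem_univ j)
  rw [hterm] at hge
  exact absurd (hlt β hβgt) (not_lt.mpr hge)

private lemma stepB2 {n : ℕ} (d b : Fin n → ℝ) (j₀ : Fin n) (hd : ∀ i, 0 < d i)
    (hb0 : ∀ i, (1 / d j₀) * d i - 1 = 0 → b i = 0)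
    (hlt : ∀ β : ℝ, 1 / d j₀ < β → (∑ i, d i * b i ^ 2 / (β * d i - 1) ^ 2) < 1) :
    (∑ i, d i * b i ^ 2 / ((1 / d j₀) * d i - 1) ^ 2) ≤ 1 := by
  set β₀ : ℝ := 1 / d j₀ with hβ₀
  have htend : Tendsto (fun β : ℝ => ∑ i, d i * b i ^ 2 / (β * d i - 1) ^ 2)
      (nhdsWithin β₀ (Set.Ioi β₀)) (nhds (∑ i, d i * b i ^ 2 / (β₀ * d i - 1) ^ 2)) := by
    apply tendsto_finset_sum
    intro i _
    by_cases hbi : b i = 0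
    · simp only [hbi]
      norm_num
    · have hne : β₀ * d i - 1 ≠ 0 := fun he => hbi (hb0 i he)
      have hc : ContinuousAt (fun β : ℝ => d i * b i ^ 2 / (β * d i - 1) ^ 2) β₀ := by
        apply ContinuousAt.div continuousAt_const
        · exact ((continuousAt_id.mul continuousAt_const).sub continuousAt_const).pow 2
        · exact pow_ne_zero 2 hne
      exact hc.tendsto.mono_left nhdsWithin_le_nhds
  exact le_of_tendsto htend
    (eventually_mem_nhdsWithin.mono fun β hβ => (hlt β hβ).le)

private lemma findbeta {n : ℕ} (d b : Fin n → ℝ) (j₀ : Fin n) (hd : ∀ i, 0 < d i)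
    (hj₀ : ∀ i, d j₀ ≤ d i) (β1 : ℝ) (hβ1 : 1 / d j₀ < β1)
    (h1 : 1 ≤ ∑ i, d i * b i ^ 2 / (β1 * d i - 1) ^ 2) :
    ∃ β : ℝ, 1 / d j₀ < β ∧ (∑ i, d i * b i ^ 2 / (β * d i - 1) ^ 2) = 1 := by
  have hdm := hd j₀
  have hβ1pos : 0 < β1 := lt_trans (by positivity) hβ1
  set C : ℝ := ∑ i, d i * b i ^ 2 with hC
  have hC0 : 0 ≤ C :=
    Finset.sum_nonneg fun i (_ : i ∈ Finset.univ) => by have := (hd i).le; positivity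
  set β2 : ℝ := β1 + Real.sqrt (C + 1) / d j₀ with hβ2def
  have hs : 0 ≤ Real.sqrt (C + 1) := Real.sqrt_nonneg _
  have hsd : 0 ≤ Real.sqrt (C + 1) / d j₀ := by positivity
  have hβ12 : β1 ≤ β2 := by rw [hβ2def]; linarith
  have hβ2pos : 0 < β2 := lt_of_lt_of_le hβ1pos hβ12
  have hβ1dm : 1 < β1 * d j₀ := by
    rw [div_lt_iff₀ hdm] at hβ1; linarith
  have hden : ∀ β ∈ Set.Icc β1 β2, ∀ i, 0 < β * d i - 1 := by
    intro β hβ i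
    nlinarith [mul_nonneg (sub_nonneg.2 hβ.1) (hd i).le,
      mul_nonneg hβ1pos.le (sub_nonneg.2 (hj₀ i))]
  have hβ2den : ∀ i, Real.sqrt (C + 1) ≤ β2 * d i - 1 := by
    intro i
    have hkey : β2 * d j₀ - 1 = (β1 * d j₀ - 1) + Real.sqrt (C + 1) := by
      rw [hβ2def]; field_simp; ring
    nlinarith [mul_nonneg hβ2pos.le (sub_nonneg.2 (hj₀ i))]
  have hhβ2 : (∑ i, d i * b i ^ 2 / (β2 * d i - 1) ^ 2) < 1 := by
    have hle : ∀ i : Fin n, d i * b i ^ 2 / (β2 * d i - 1) ^ 2 ≤ d i * b i ^ 2 / (C + 1) := by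
      intro i
      apply div_le_div_of_nonneg_left (by have := (hd i).le; positivity) (by linarith)
      calc C + 1 = Real.sqrt (C+1) ^ 2 := (Real.sq_sqrt (by linarith)).symm
        _ ≤ (β2 * d i - 1) ^ 2 := by nlinarith [hβ2den i, hs]
    calc (∑ i, d i * b i ^ 2 / (β2 * d i - 1) ^ 2) ≤ ∑ i, d i * b i ^ 2 / (C + 1) :=
          Finset.sum_le_sum fun i _ => hle i
      _ = C / (C + 1) := by rw [← Finset.sum_div]
      _ < 1 := by rw [div_lt_one (by linarith)]; linarith
  have hcont : ContinuousOn (fun β : ℝ => ∑ i, d i * b i ^ 2 / (β * d i - 1) ^ 2)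
      (Set.Icc β1 β2) := by
    apply continuousOn_finset_sum
    intro i _
    apply ContinuousOn.div continuousOn_const
    · exact ((continuousOn_id.mul continuousOn_const).sub continuousOn_const).pow 2
    · intro β hβ
      exact pow_ne_zero 2 (hden β hβ i).ne'
  have hmem : (1:ℝ) ∈ Set.Icc ((fun β : ℝ => ∑ i, d i * b i ^ 2 / (β * d i - 1) ^ 2) β2)
      ((fun β : ℝ => ∑ i, d i * b i ^ 2 / (β * d i - 1) ^ 2) β1) := ⟨hhβ2.le, h1⟩
  obtain ⟨β, hβmem, hβeq⟩ := intermediate_value_Icc' hβ12 hcont hmem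
  exact ⟨β, lt_of_lt_of_le hβ1 hβmem.1, hβeq⟩

private lemma core {n : ℕ} (d b : Fin n → ℝ) (γ : ℝ) (hd : ∀ i, 0 < d i)
    (H : ∀ y : Fin n → ℝ, (∑ i, d i * y i ^ 2) ≤ 1 →
      (∑ i, y i ^ 2) + 2 * (∑ i, b i * y i) + γ ≤ 0) :
    ∃ β : ℝ, 0 ≤ β ∧ ∀ y : Fin n → ℝ,
      (∑ i, y i ^ 2) + 2 * (∑ i, b i * y i) + γ ≤ β * ((∑ i, d i * y i ^ 2) - 1) := by
  rcases isEmpty_or_nonempty (Fin n) with hem | hne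
  · have hγ : γ ≤ 0 := by
      have := H 0 (by simp)
      simpa using this
    refine ⟨-γ, by linarith, fun y => ?_⟩
    simp [Finset.univ_eq_empty]
  · obtain ⟨j₀, -, hj₀'⟩ :=
      Finset.exists_min_image Finset.univ d Finset.univ_nonempty
    have hj₀ : ∀ i, d j₀ ≤ d i := fun i => hj₀' i (Finset.mem_univ i)
    have hdm : 0 < d j₀ := hd j₀
    have hβ₀pos : (0:ℝ) < 1 / d j₀ := by positivity
    by_cases hcase : ∃ β1 : ℝ, 1 / d j₀ < β1 ∧
        1 ≤ ∑ i, d i * b i ^ 2 / (β1 * d i - 1) ^ 2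
    · obtain ⟨β1, hβ1, h1⟩ := hcase
      obtain ⟨β, hβgt, hβeq⟩ := findbeta d b j₀ hd hj₀ β1 hβ1 h1
      have hβpos : 0 < β := lt_trans hβ₀pos hβgt
      have hβd : ∀ i, 0 < β * d i - 1 := by
        intro i
        have h2 : 1 < β * d j₀ := by
          rw [div_lt_iff₀ hdm] at hβgt; linarith
        nlinarith [mul_nonneg hβpos.le (sub_nonneg.2 (hj₀ i))]
      refine ⟨β, hβpos.le, ?_⟩
      exact verify d b γ β (fun i => (hβd i).le)
        (fun i he => absurd he (hβd i).ne')
        (caseA_psi d b γ H β (fun i => (hβd i).ne') hβeq)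
    · push_neg at hcase
      have hlt : ∀ β : ℝ, 1 / d j₀ < β →
          (∑ i, d i * b i ^ 2 / (β * d i - 1) ^ 2) < 1 := fun β hβ => hcase β hβ
      have hb0 := stepB1 d b j₀ hd hlt
      have hσ1 := stepB2 d b j₀ hd hb0 hlt
      have hβd : ∀ i, 0 ≤ (1 / d j₀) * d i - 1 := by
        intro i
        have := mul_le_mul_of_nonneg_left (hj₀ i) hβ₀pos.le
        rw [one_div_mul_cancel hdm.ne'] at this
        linarith
      exact ⟨1 / d j₀, hβ₀pos.le,
        verify d b γ (1 / d j₀) hβd hb0 (caseB_psi d b γ j₀ hd H hb0 hσ1)⟩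

end SProcedureAux

theorem stmt_13 {n : ℕ} (P : Matrix (Fin n) (Fin n) ℝ) (c : Fin n → ℝ) (hP : P.PosDef) :
    Ellipsoid c P ⊆ UnitBall n ↔
      ∃ β : ℝ, 0 ≤ β ∧ ∀ x : Fin n → ℝ,
        -(x ⬝ᵥ x) + β * ((x - c) ⬝ᵥ P.mulVec (x - c) - 1) ≥ -1 := by
  constructor
  · intro hsub
    have hH : P.IsHermitian := hP.1
    set U : Matrix (Fin n) (Fin n) ℝ := (hH.eigenvectorUnitary : Matrix (Fin n) (Fin n) ℝ)
      with hUdef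
    set V : Matrix (Fin n) (Fin n) ℝ := star U with hVdef
    set d : Fin n → ℝ := hH.eigenvalues with hd_def
    have hdpos : ∀ i, 0 < d i := hP.eigenvalues_pos
    have hspec : P = U * diagonal d * V := by
      have h := hH.spectral_theorem
      rwa [RCLike.ofReal_real_eq_id, Function.id_comp] at h
    have hVU : V * U = 1 := Unitary.coe_star_mul_self hH.eigenvectorUnitary
    have hUV : U * V = 1 := by
      rw [hVdef]
      exact Unitary.coe_mul_star_self hH.eigenvectorUnitary
    have adj : ∀ v w : Fin n → ℝ, (U *ᵥ v) ⬝ᵥ w = v ⬝ᵥ (V *ᵥ w) := by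
      intro v w
      have hVT : V = Uᵀ := by
        rw [hVdef, Matrix.star_eq_conjTranspose, Matrix.conjTranspose]
        ext i j; simp
      rw [hVT, Matrix.mulVec_transpose, dotProduct_comm (U *ᵥ v) w,
        Matrix.dotProduct_mulVec, dotProduct_comm]
    have idrec : ∀ w : Fin n → ℝ, U *ᵥ (V *ᵥ w) = w := by
      intro w
      rw [Matrix.mulVec_mulVec, hUV, Matrix.one_mulVec]
    have idrec2 : ∀ w : Fin n → ℝ, V *ᵥ (U *ᵥ w) = w := by
      intro w
      rw [Matrix.mulVec_mulVec, hVU, Matrix.one_mulVec]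
    -- quadratic form identity
    have idq : ∀ v : Fin n → ℝ, v ⬝ᵥ (P *ᵥ v) = ∑ i, d i * (V *ᵥ v) i ^ 2 := by
      intro v
      rw [hspec]
      have h1 : (U * diagonal d * V) *ᵥ v = U *ᵥ (diagonal d *ᵥ (V *ᵥ v)) := by
        rw [Matrix.mulVec_mulVec, Matrix.mulVec_mulVec]
      rw [h1, dotProduct_comm, adj, dotProduct_comm]
      simp only [dotProduct, Matrix.mulVec_diagonal]
      exact Finset.sum_congr rfl fun i _ => by ring
    have idnorm : ∀ v : Fin n → ℝ, v ⬝ᵥ v = ∑ i, (V *ᵥ v) i ^ 2 := by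
      intro v
      conv_lhs => rw [← idrec v]
      rw [adj, idrec]
      simp only [dotProduct]
      exact Finset.sum_congr rfl fun i _ => by ring
    set b : Fin n → ℝ := V *ᵥ c with hb_def
    set γ : ℝ := c ⬝ᵥ c - 1 with hγ_def
    have idx : ∀ x : Fin n → ℝ, x ⬝ᵥ x
        = (∑ i, (V *ᵥ (x - c)) i ^ 2) + 2 * (∑ i, b i * (V *ᵥ (x - c)) i) + (γ + 1) := by
      intro x
      have h1 : x ⬝ᵥ x = (x - c) ⬝ᵥ (x - c) + 2 * ((x - c) ⬝ᵥ c) + c ⬝ᵥ c := by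
        conv_lhs => rw [(sub_add_cancel x c).symm]
        rw [add_dotProduct, dotProduct_add, dotProduct_add,
          dotProduct_comm c (x - c)]
        ring
      have h2 : (x - c) ⬝ᵥ (x - c) = ∑ i, (V *ᵥ (x - c)) i ^ 2 := idnorm (x - c)
      have h3 : (x - c) ⬝ᵥ c = ∑ i, b i * (V *ᵥ (x - c)) i := by
        conv_lhs => rw [← idrec (x - c)]
        rw [adj]
        simp only [dotProduct]
        exact Finset.sum_congr rfl fun i _ => by ring
      rw [h1, h2, h3, hγ_def]; ring
    have Hc : ∀ y : Fin n → ℝ, (∑ i, d i * y i ^ 2) ≤ 1 →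
        (∑ i, y i ^ 2) + 2 * (∑ i, b i * y i) + γ ≤ 0 := by
      intro y hy
      set x : Fin n → ℝ := U *ᵥ y + c with hx_def
      have hxc : x - c = U *ᵥ y := by rw [hx_def, add_sub_cancel_right]
      have hVxc : V *ᵥ (x - c) = y := by rw [hxc, idrec2]
      have hq : (x - c) ⬝ᵥ P *ᵥ (x - c) ≤ 1 := by rw [idq, hVxc]; exact hy
      have hmem : x ∈ Ellipsoid c P := hq
      have hball : x ⬝ᵥ x ≤ 1 := hsub hmem
      have hxx := idx x
      rw [hVxc] at hxx
      linarith
    obtain ⟨β, hβ0, hβ⟩ := core d b γ hdpos Hc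
    refine ⟨β, hβ0, fun x => ?_⟩
    have h1 := hβ (V *ᵥ (x - c))
    have h2 := idx x
    have h3 := idq (x - c)
    rw [ge_iff_le]
    rw [h3, h2]
    linarith
  · rintro ⟨β, hβ, h⟩ x hx
    have hx' : (x - c) ⬝ᵥ P.mulVec (x - c) ≤ 1 := hx
    have hh := h x
    have : β * ((x - c) ⬝ᵥ P.mulVec (x - c) - 1) ≤ 0 :=
      mul_nonpos_of_nonneg_of_nonpos hβ (by linarith)
    show x ⬝ᵥ x ≤ 1
    linarith
end
end

section
/- Let P ∈ ℝ^{n×n} be symmetric positive definite and c ∈ ℝⁿ. Then E(c,P) ⊆ B(0,1) if and only if there exists β ≥ 0 such that the (n+1)×(n+1) block matrix F(β) := [[βP − I, −βPc], [−β(Pc)ᵀ, β(cᵀPc − 1) + 1]] is positive semidefinite. -/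
open Matrix

noncomputable section

/-- The symmetric block matrix
`F(β) = [[βP − I, −βPc], [−β(Pc)ᵀ, β(cᵀPc − 1) + 1]]`. -/
def Fmat {n : ℕ} (P : Matrix (Fin n) (Fin n) ℝ) (c : Fin n → ℝ) (β : ℝ) :
    Matrix (Fin n ⊕ Fin 1) (Fin n ⊕ Fin 1) ℝ :=
  Matrix.fromBlocks (β • P - 1)
    (Matrix.of fun i (_ : Fin 1) => -β * P.mulVec c i)
    (Matrix.of fun (_ : Fin 1) j => -β * P.mulVec c j)
    (Matrix.of fun (_ : Fin 1) (_ : Fin 1) => β * (c ⬝ᵥ P.mulVec c - 1) + 1)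

namespace Stmt14Aux

lemma dot_symm {n : ℕ} (M : Matrix (Fin n) (Fin n) ℝ) (h : Mᵀ = M) (x z : Fin n → ℝ) :
    x ⬝ᵥ M.mulVec z = z ⬝ᵥ M.mulVec x := by
  rw [dotProduct_mulVec, ← mulVec_transpose, h, dotProduct_comm]

lemma dot_cont {n : ℕ} (P : Matrix (Fin n) (Fin n) ℝ) :
    Continuous (fun y : Fin n → ℝ => y ⬝ᵥ P.mulVec y) := by
  simp only [dotProduct, mulVec]
  fun_prop

lemma dot_self_nonneg {n : ℕ} (v : Fin n → ℝ) : 0 ≤ v ⬝ᵥ v := by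
  simpa using dotProduct_self_star_nonneg v

lemma dot_self_pos {n : ℕ} {v : Fin n → ℝ} (h : v ≠ 0) : 0 < v ⬝ᵥ v := by
  have := dotProduct_self_star_pos_iff (v := v)
  simpa using this.mpr h

lemma smul_quad {n : ℕ} (M : Matrix (Fin n) (Fin n) ℝ) (t : ℝ) (y : Fin n → ℝ) :
    (t • y) ⬝ᵥ M.mulVec (t • y) = t^2 * (y ⬝ᵥ M.mulVec y) := by
  rw [mulVec_smul, smul_dotProduct, dotProduct_smul, smul_eq_mul, smul_eq_mul]
  ring

lemma smul_dot {n : ℕ} (t : ℝ) (y : Fin n → ℝ) :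
    (t • y) ⬝ᵥ (t • y) = t^2 * (y ⬝ᵥ y) := by
  rw [smul_dotProduct, dotProduct_smul, smul_eq_mul, smul_eq_mul]
  ring

lemma coercive {n : ℕ} {P : Matrix (Fin n) (Fin n) ℝ} (hP : P.PosDef) :
    ∃ m > 0, ∀ y : Fin n → ℝ, m * (y ⬝ᵥ y) ≤ y ⬝ᵥ P.mulVec y := by
  rcases isEmpty_or_nonempty (Fin n) with hE | hE
  · exact ⟨1, one_pos, fun y => by simp [dotProduct]⟩
  set K : Set (Fin n → ℝ) := {y | y ⬝ᵥ y = 1} with hK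
  have hqcont : Continuous (fun y : Fin n → ℝ => y ⬝ᵥ y) := by
    simp only [dotProduct]; fun_prop
  have hKclosed : IsClosed K := isClosed_eq hqcont continuous_const
  have hKsub : K ⊆ Metric.closedBall 0 1 := by
    intro y hy
    simp only [Metric.mem_closedBall, dist_zero_right]
    rw [pi_norm_le_iff_of_nonneg zero_le_one]
    intro i
    rw [Real.norm_eq_abs, abs_le_one_iff_mul_self_le_one]
    have h1 : y i * y i ≤ y ⬝ᵥ y := by
      unfold dotProduct
      exact Finset.single_le_sum (fun j _ => mul_self_nonneg (y j)) (Finset.mem_univ i)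
    rw [hy] at h1
    exact h1
  have hKcpt : IsCompact K :=
    (isCompact_closedBall (0 : Fin n → ℝ) 1).of_isClosed_subset hKclosed hKsub
  have hKne : K.Nonempty := by
    obtain ⟨i⟩ := hE
    refine ⟨Pi.single i 1, ?_⟩
    simp [hK, dotProduct, Pi.single_apply]
  obtain ⟨ym, hymK, hmin⟩ := hKcpt.exists_isMinOn hKne (dot_cont P).continuousOn
  set m := ym ⬝ᵥ P.mulVec ym with hm
  have hym0 : ym ≠ 0 := by
    intro h0
    rw [h0] at hymK
    simp [hK, dotProduct] at hymK
  have hmpos : 0 < m := by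
    have := hP.dotProduct_mulVec_pos hym0
    simpa using this
  refine ⟨m, hmpos, fun y => ?_⟩
  rcases eq_or_ne y 0 with rfl | hy0
  · simp
  · have hdp : 0 < y ⬝ᵥ y := dot_self_pos hy0
    set ρ := Real.sqrt (y ⬝ᵥ y) with hρ
    have hρpos : 0 < ρ := Real.sqrt_pos.mpr hdp
    have hρsq : ρ^2 = y ⬝ᵥ y := Real.sq_sqrt hdp.le
    have huK : (ρ⁻¹ • y) ∈ K := by
      show (ρ⁻¹ • y) ⬝ᵥ (ρ⁻¹ • y) = 1
      rw [smul_dotProduct, dotProduct_smul, smul_eq_mul, smul_eq_mul, ← mul_assoc]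
      field_simp
      nlinarith
    have hle := hmin huK
    have hq : (ρ⁻¹ • y) ⬝ᵥ P.mulVec (ρ⁻¹ • y) = (ρ⁻¹)^2 * (y ⬝ᵥ P.mulVec y) := smul_quad P ρ⁻¹ y
    simp only [Set.mem_setOf_eq] at hle
    rw [hq] at hle
    have h2 : m * ρ^2 ≤ y ⬝ᵥ P.mulVec y := by
      have hρ2 : (0:ℝ) < ρ^2 := by positivity
      calc m * ρ^2 ≤ ((ρ⁻¹)^2 * (y ⬝ᵥ P.mulVec y)) * ρ^2 := by nlinarith
        _ = y ⬝ᵥ P.mulVec y := by field_simp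
    rw [hρsq] at h2
    exact h2

/-- quadratic expansion for a symmetric matrix -/
lemma quad_expand {n : ℕ} (M : Matrix (Fin n) (Fin n) ℝ) (h : Mᵀ = M) (z w : Fin n → ℝ) :
    z ⬝ᵥ M.mulVec z =
      w ⬝ᵥ M.mulVec w + 2 * ((M.mulVec w) ⬝ᵥ (z - w)) + (z - w) ⬝ᵥ M.mulVec (z - w) := by
  have h1 : w ⬝ᵥ M.mulVec z = z ⬝ᵥ M.mulVec w := dot_symm M h w z
  have h2 : (M.mulVec w) ⬝ᵥ z = z ⬝ᵥ M.mulVec w := dotProduct_comm _ _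
  have h3 : (M.mulVec w) ⬝ᵥ w = w ⬝ᵥ M.mulVec w := dotProduct_comm _ _
  simp only [mulVec_sub, dotProduct_sub, sub_dotProduct]
  rw [h1, h2, h3]
  ring

lemma expand_dot_add {n : ℕ} (y c : Fin n → ℝ) :
    (y + c) ⬝ᵥ (y + c) = y ⬝ᵥ y + 2 * (c ⬝ᵥ y) + c ⬝ᵥ c := by
  simp only [add_dotProduct, dotProduct_add]
  rw [dotProduct_comm y c]
  ring

lemma Mform {n : ℕ} (P : Matrix (Fin n) (Fin n) ℝ) (β : ℝ) (z : Fin n → ℝ) :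
    z ⬝ᵥ (β • P - 1).mulVec z = β * (z ⬝ᵥ P.mulVec z) - z ⬝ᵥ z := by
  rw [sub_mulVec, smul_mulVec, one_mulVec, dotProduct_sub, dotProduct_smul, smul_eq_mul]

set_option maxHeartbeats 1000000 in
/-- Core of the forward direction. -/
lemma forward_core {n : ℕ} {P : Matrix (Fin n) (Fin n) ℝ} (hP : P.PosDef) (c : Fin n → ℝ)
    (hsub : ∀ y : Fin n → ℝ, y ⬝ᵥ P.mulVec y ≤ 1 → (y + c) ⬝ᵥ (y + c) ≤ 1) :
    ∃ β : ℝ, 0 ≤ β ∧ (∀ v : Fin n → ℝ, 0 ≤ v ⬝ᵥ (β • P - 1).mulVec v) ∧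
      (∀ y : Fin n → ℝ, (y + c) ⬝ᵥ (y + c) ≤ 1 + β * (y ⬝ᵥ P.mulVec y - 1)) := by
  have hPt : Pᵀ = P := by
    rw [← conjTranspose_eq_transpose_of_trivial P]
    exact hP.1
  have hPq : ∀ x : Fin n → ℝ, x ≠ 0 → 0 < x ⬝ᵥ P.mulVec x := by
    intro x hx; have := hP.dotProduct_mulVec_pos hx; simpa using this
  rcases isEmpty_or_nonempty (Fin n) with hE | hE
  · refine ⟨0, le_refl _, fun v => by simp [dotProduct], fun y => ?_⟩
    have h0 : (y + c) ⬝ᵥ (y + c) = 0 := by simp [dotProduct]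
    rw [h0]; norm_num
  -- compact feasible set
  set q : (Fin n → ℝ) → ℝ := fun y => y ⬝ᵥ P.mulVec y with hqdef
  set f : (Fin n → ℝ) → ℝ := fun y => (y + c) ⬝ᵥ (y + c) with hfdef
  set S : Set (Fin n → ℝ) := {y | q y ≤ 1} with hSdef
  have h0S : (0 : Fin n → ℝ) ∈ S := by show q 0 ≤ 1; simp [hqdef]
  obtain ⟨m, hmpos, hco⟩ := coercive hP
  have hScl : IsClosed S := isClosed_le (dot_cont P) continuous_const
  have hSbd : S ⊆ Metric.closedBall 0 (Real.sqrt (1/m)) := by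
    intro y hy
    simp only [Metric.mem_closedBall, dist_zero_right]
    have h1 : y ⬝ᵥ y ≤ 1/m := by
      have hy' : q y ≤ 1 := hy
      rw [le_div_iff₀ hmpos, mul_comm]
      exact (hco y).trans hy'
    rw [pi_norm_le_iff_of_nonneg (Real.sqrt_nonneg _)]
    intro i
    rw [Real.norm_eq_abs, ← Real.sqrt_sq_eq_abs]
    apply Real.sqrt_le_sqrt
    have h2 : y i * y i ≤ y ⬝ᵥ y := by
      unfold dotProduct
      exact Finset.single_le_sum (fun j _ => mul_self_nonneg (y j)) (Finset.mem_univ i)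
    nlinarith
  have hScpt : IsCompact S :=
    (isCompact_closedBall (0 : Fin n → ℝ) _).of_isClosed_subset hScl hSbd
  have hSne : S.Nonempty := ⟨0, h0S⟩
  have hfcont : Continuous f := by
    simp only [hfdef, dotProduct]; fun_prop
  obtain ⟨y₀, hy₀S, hmax⟩ := hScpt.exists_isMaxOn hSne hfcont.continuousOn
  have hy₀q : q y₀ ≤ 1 := hy₀S
  have hmax' : ∀ y ∈ S, f y ≤ f y₀ := fun y hy => hmax hy
  -- the maximizer is on the boundary
  have hq0 : q y₀ = 1 := by
    by_contra hne
    have hlt : q y₀ < 1 := lt_of_le_of_ne hy₀q hne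
    rcases eq_or_lt_of_le (dot_self_nonneg (y₀ + c)) with hf0 | hfpos
    · -- f y₀ = 0 : contradiction since f is not ≡ 0 on S
      have hcf : ∀ y ∈ S, y + c = 0 := by
        intro y hy
        have h1 : f y ≤ f y₀ := hmax' y hy
        have h2 : f y₀ = 0 := hf0.symm
        have h3 : f y = 0 := le_antisymm (h1.trans (le_of_eq h2)) (dot_self_nonneg _)
        have h4 := dotProduct_self_star_eq_zero (v := y + c)
        simp only [star_trivial] at h4
        exact h4.mp h3
      obtain ⟨i⟩ := hE
      set e : Fin n → ℝ := Pi.single i 1 with he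
      have he0 : e ≠ 0 := by
        intro h
        have := congr_fun h i
        simp [he] at this
      have hqe : 0 < q e := hPq e he0
      set t : ℝ := Real.sqrt (1 / q e) with ht
      have htpos : 0 < t := Real.sqrt_pos.mpr (by positivity)
      have htS : (t • e) ∈ S := by
        show q (t • e) ≤ 1
        have h5 : q (t • e) = t^2 * q e := smul_quad P t e
        rw [h5, ht, Real.sq_sqrt (by positivity)]
        rw [one_div, inv_mul_cancel₀ hqe.ne']
      have hc0 : c = 0 := by have := hcf 0 h0S; simpa using this
      have h6 := hcf (t • e) htS
      rw [hc0, add_zero] at h6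
      have h7 := congr_fun h6 i
      simp only [he, Pi.smul_apply, Pi.single_eq_same, smul_eq_mul, mul_one,
        Pi.zero_apply] at h7
      exact htpos.ne' h7
    · -- f y₀ > 0 : push to the boundary, contradiction with maximality
      set d : Fin n → ℝ := y₀ + c with hd
      have hd0 : d ≠ 0 := by
        intro h
        rw [h] at hfpos
        simp at hfpos
      set a : ℝ := d ⬝ᵥ P.mulVec d with ha
      have hapos : 0 < a := hPq d hd0
      set b : ℝ := d ⬝ᵥ P.mulVec y₀ with hb
      set s : ℝ := Real.sqrt (b^2 + a * (1 - q y₀)) with hs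
      have hrad : 0 < b^2 + a * (1 - q y₀) := by nlinarith [sq_nonneg b]
      have hs2 : s^2 = b^2 + a * (1 - q y₀) := Real.sq_sqrt hrad.le
      have hsb : b < s := by
        rcases le_or_gt b 0 with h | h
        · have : 0 < s := Real.sqrt_pos.mpr hrad
          linarith
        · nlinarith [Real.sqrt_nonneg (b^2 + a * (1 - q y₀))]
      set t : ℝ := (s - b) / a with ht
      have htpos : 0 < t := div_pos (by linarith) hapos
      set y₁ : Fin n → ℝ := y₀ + t • d with hy₁
      have hqy₁ : q y₁ = q y₀ + 2 * t * b + t^2 * a := by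
        show (y₀ + t • d) ⬝ᵥ P.mulVec (y₀ + t • d) = _
        have hsymm : y₀ ⬝ᵥ P.mulVec d = d ⬝ᵥ P.mulVec y₀ := dot_symm P hPt y₀ d
        simp only [mulVec_add, dotProduct_add, add_dotProduct, mulVec_smul, dotProduct_smul,
          smul_dotProduct, smul_eq_mul]
        rw [hsymm]
        ring
      have hq1 : q y₁ = 1 := by
        rw [hqy₁, ht]
        field_simp
        nlinarith
      have hfy₁ : f y₁ = (1 + t)^2 * f y₀ := by
        have h8 : y₁ + c = (1 + t) • d := by
          rw [hy₁, hd]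
          ext j
          simp only [Pi.add_apply, Pi.smul_apply, smul_eq_mul]
          ring
        show (y₁ + c) ⬝ᵥ (y₁ + c) = (1 + t)^2 * ((y₀ + c) ⬝ᵥ (y₀ + c))
        rw [h8, ← hd, smul_dot]
      have hy₁S : y₁ ∈ S := by show q y₁ ≤ 1; rw [hq1]
      have h9 := hmax' y₁ hy₁S
      rw [hfy₁] at h9
      nlinarith
  -- KKT multiplier
  set g : Fin n → ℝ := y₀ + c with hg
  set β : ℝ := g ⬝ᵥ y₀ with hβ
  have hnc : ∀ y ∈ S, g ⬝ᵥ y ≤ g ⬝ᵥ y₀ := by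
    intro y hy
    have h1 : f y ≤ f y₀ := hmax' y hy
    have e1 : f y = y ⬝ᵥ y + 2 * (c ⬝ᵥ y) + c ⬝ᵥ c := expand_dot_add y c
    have e2 : f y₀ = y₀ ⬝ᵥ y₀ + 2 * (c ⬝ᵥ y₀) + c ⬝ᵥ c := expand_dot_add y₀ c
    have e3 : g ⬝ᵥ y = y₀ ⬝ᵥ y + c ⬝ᵥ y := add_dotProduct y₀ c y
    have e4 : g ⬝ᵥ y₀ = y₀ ⬝ᵥ y₀ + c ⬝ᵥ y₀ := add_dotProduct y₀ c y₀
    have e5 : (y - y₀) ⬝ᵥ (y - y₀) = y ⬝ᵥ y - 2 * (y₀ ⬝ᵥ y) + y₀ ⬝ᵥ y₀ := by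
      simp only [sub_dotProduct, dotProduct_sub]
      rw [dotProduct_comm y y₀]
      ring
    have e6 : 0 ≤ (y - y₀) ⬝ᵥ (y - y₀) := dot_self_nonneg _
    linarith
  have hβ0 : 0 ≤ β := by
    have := hnc 0 h0S
    simpa using this
  -- g = β P y₀
  have hr : g = β • P.mulVec y₀ := by
    rcases eq_or_ne g 0 with hg0 | hg0
    · rw [hg0, hβ, hg0]
      simp
    · have hPinv : (P⁻¹).PosDef := hP.inv
      have hPinvT : (P⁻¹)ᵀ = P⁻¹ := by rw [transpose_nonsing_inv, hPt]
      have hdet : IsUnit P.det := isUnit_iff_ne_zero.mpr hP.det_pos.ne'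
      have hPP : P * P⁻¹ = 1 := mul_nonsing_inv P hdet
      have hPP' : P⁻¹ * P = 1 := nonsing_inv_mul P hdet
      set γ : ℝ := g ⬝ᵥ P⁻¹.mulVec g with hγ
      have hγpos : 0 < γ := by have := hPinv.dotProduct_mulVec_pos hg0; simpa using this
      set s : ℝ := Real.sqrt γ with hs
      have hspos : 0 < s := Real.sqrt_pos.mpr hγpos
      have hs2 : s^2 = γ := Real.sq_sqrt hγpos.le
      set yh : Fin n → ℝ := s⁻¹ • (P⁻¹.mulVec g) with hyh
      have hyhS : yh ∈ S := by
        show q yh ≤ 1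
        have h1 : q yh = (s⁻¹)^2 * ((P⁻¹.mulVec g) ⬝ᵥ P.mulVec (P⁻¹.mulVec g)) :=
          smul_quad P s⁻¹ _
        have h2 : P.mulVec (P⁻¹.mulVec g) = g := by
          rw [mulVec_mulVec, hPP, one_mulVec]
        rw [h1, h2]
        have h3 : (P⁻¹.mulVec g) ⬝ᵥ g = γ := by
          rw [dotProduct_comm, hγ]
        rw [h3, inv_pow, hs2, inv_mul_cancel₀ hγpos.ne']
      have hgyh : g ⬝ᵥ yh = s := by
        rw [hyh, dotProduct_smul, smul_eq_mul, ← hγ]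
        rw [show γ = s^2 from hs2.symm]
        field_simp
      have hsβ : s ≤ β := by
        have := hnc yh hyhS
        rwa [hgyh] at this
      set r : Fin n → ℝ := g - β • P.mulVec y₀ with hrdef
      have hrq : r ⬝ᵥ P⁻¹.mulVec r = γ - β^2 := by
        have h2 : P⁻¹.mulVec (P.mulVec y₀) = y₀ := by
          rw [mulVec_mulVec, hPP', one_mulVec]
        have h4 : (P.mulVec y₀) ⬝ᵥ (P⁻¹.mulVec g) = g ⬝ᵥ y₀ := by
          rw [dot_symm P⁻¹ hPinvT (P.mulVec y₀) g, h2]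
        have h5 : (P.mulVec y₀) ⬝ᵥ y₀ = 1 := by
          rw [dotProduct_comm]; exact hq0
        simp only [hrdef, mulVec_sub, mulVec_smul, dotProduct_sub, sub_dotProduct,
          dotProduct_smul, smul_dotProduct, smul_eq_mul, h2, h4, h5]
        rw [show g ⬝ᵥ P⁻¹.mulVec g = γ from rfl, show g ⬝ᵥ y₀ = β from rfl]
        ring
      have hrle : r ⬝ᵥ P⁻¹.mulVec r ≤ 0 := by
        rw [hrq]
        nlinarith
      have hr0 : r = 0 := by
        by_contra hrne
        have := hPinv.dotProduct_mulVec_pos hrne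
        simp only [star_trivial] at this
        linarith
      exact sub_eq_zero.mp hr0
  -- gradient condition
  have hMt : (β • P - 1)ᵀ = β • P - 1 := by
    rw [transpose_sub, transpose_smul, transpose_one, hPt]
  have hMy₀ : (β • P - 1).mulVec y₀ = c := by
    rw [sub_mulVec, smul_mulVec, one_mulVec, ← hr, hg]
    ext j
    simp
  -- chord condition on the boundary
  have hchord : ∀ y : Fin n → ℝ, q y = 1 → 0 ≤ (y - y₀) ⬝ᵥ (β • P - 1).mulVec (y - y₀) := by
    intro y hqy
    have hyS : y ∈ S := by show q y ≤ 1; rw [hqy]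
    have h1 : f y ≤ f y₀ := hmax' y hyS
    have e0 := quad_expand (β • P - 1) hMt y y₀
    rw [hMy₀, dotProduct_sub] at e0
    have e1 : y ⬝ᵥ (β • P - 1).mulVec y = β * q y - y ⬝ᵥ y := Mform P β y
    have e2 : y₀ ⬝ᵥ (β • P - 1).mulVec y₀ = β * q y₀ - y₀ ⬝ᵥ y₀ := Mform P β y₀
    rw [hMy₀] at e2
    have e3 : f y = y ⬝ᵥ y + 2 * (c ⬝ᵥ y) + c ⬝ᵥ c := expand_dot_add y c
    have e4 : f y₀ = y₀ ⬝ᵥ y₀ + 2 * (c ⬝ᵥ y₀) + c ⬝ᵥ c := expand_dot_add y₀ c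
    have e5 : β * q y = β * q y₀ := by rw [hqy, hq0]
    linarith
  -- positive semidefiniteness of β P - I
  have hM : ∀ v : Fin n → ℝ, 0 ≤ v ⬝ᵥ (β • P - 1).mulVec v := by
    have hstep : ∀ w : Fin n → ℝ, w ⬝ᵥ P.mulVec y₀ ≠ 0 → 0 ≤ w ⬝ᵥ (β • P - 1).mulVec w := by
      intro w hbw
      have hw0 : w ≠ 0 := by
        intro h; rw [h] at hbw; simp at hbw
      have hapos : 0 < q w := hPq w hw0
      set a : ℝ := q w with ha
      set bw : ℝ := w ⬝ᵥ P.mulVec y₀ with hbwdef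
      set t : ℝ := -2 * bw / a with htdef
      have ht0 : t ≠ 0 := by
        apply div_ne_zero _ hapos.ne'
        intro h
        apply hbw
        linarith [h]
      set y : Fin n → ℝ := y₀ + t • w with hydef
      have hqy : q y = q y₀ + 2 * t * bw + t^2 * a := by
        show (y₀ + t • w) ⬝ᵥ P.mulVec (y₀ + t • w) = _
        have hsymm : y₀ ⬝ᵥ P.mulVec w = w ⬝ᵥ P.mulVec y₀ := dot_symm P hPt y₀ w
        simp only [mulVec_add, dotProduct_add, add_dotProduct, mulVec_smul, dotProduct_smul,
          smul_dotProduct, smul_eq_mul]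
        rw [hsymm]
        ring
      have hzero : 2 * t * bw + t^2 * a = 0 := by
        rw [htdef]
        field_simp
        ring
      have hq1 : q y = 1 := by rw [hqy, hq0]; linarith
      have hcd := hchord y hq1
      have hyy : y - y₀ = t • w := by rw [hydef]; abel
      rw [hyy, smul_quad] at hcd
      have ht2 : 0 < t^2 := by positivity
      nlinarith
    intro v
    set A : ℝ := v ⬝ᵥ (β • P - 1).mulVec v with hA
    set B : ℝ := v ⬝ᵥ (β • P - 1).mulVec y₀ with hB
    set C : ℝ := y₀ ⬝ᵥ (β • P - 1).mulVec y₀ with hC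
    set b : ℝ := v ⬝ᵥ P.mulVec y₀ with hb
    have hval : ∀ ε : ℝ, (v + ε • y₀) ⬝ᵥ (β • P - 1).mulVec (v + ε • y₀)
        = A + 2 * ε * B + ε^2 * C := by
      intro ε
      have hsym : y₀ ⬝ᵥ (β • P - 1).mulVec v = v ⬝ᵥ (β • P - 1).mulVec y₀ :=
        dot_symm _ hMt y₀ v
      simp only [mulVec_add, dotProduct_add, add_dotProduct, mulVec_smul, dotProduct_smul,
        smul_dotProduct, smul_eq_mul, hA, hB, hC]
      rw [hsym]
      ring
    have hpair : ∀ ε : ℝ, (v + ε • y₀) ⬝ᵥ P.mulVec y₀ = b + ε := by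
      intro ε
      rw [add_dotProduct, smul_dotProduct, smul_eq_mul]
      rw [show y₀ ⬝ᵥ P.mulVec y₀ = 1 from hq0]
      rw [hb]; ring
    have hev : ∀ ε : ℝ, b + ε ≠ 0 → 0 ≤ A + 2 * ε * B + ε^2 * C := by
      intro ε hε
      have := hstep (v + ε • y₀) (by rw [hpair]; exact hε)
      rwa [hval] at this
    have hcontp : Continuous (fun ε : ℝ => A + 2 * ε * B + ε^2 * C) := by fun_prop
    have hlim : Filter.Tendsto (fun ε : ℝ => A + 2 * ε * B + ε^2 * C) (nhds 0) (nhds A) := by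
      have h0 := hcontp.tendsto 0
      norm_num at h0
      exact h0
    rcases le_or_gt 0 b with hbs | hbs
    · have hlim' := hlim.mono_left (nhdsWithin_le_nhds (s := Set.Ioi (0:ℝ)))
      refine ge_of_tendsto hlim' ?_
      apply eventually_nhdsWithin_of_forall
      intro ε hε
      exact hev ε (by have : (0:ℝ) < ε := hε; positivity)
    · have hlim' := hlim.mono_left (nhdsWithin_le_nhds (s := Set.Iio (0:ℝ)))
      refine ge_of_tendsto hlim' ?_
      apply eventually_nhdsWithin_of_forall
      intro ε hε
      have : ε < 0 := hε
      exact hev ε (by linarith)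
  -- global inequality
  refine ⟨β, hβ0, hM, ?_⟩
  intro y
  have hfy₀ : f y₀ ≤ 1 := hsub y₀ hy₀q
  have e0 := quad_expand (β • P - 1) hMt y y₀
  rw [hMy₀, dotProduct_sub] at e0
  have e1 : y ⬝ᵥ (β • P - 1).mulVec y = β * q y - y ⬝ᵥ y := Mform P β y
  have e2 : y₀ ⬝ᵥ (β • P - 1).mulVec y₀ = β * q y₀ - y₀ ⬝ᵥ y₀ := Mform P β y₀
  rw [hMy₀] at e2
  have e3 : f y = y ⬝ᵥ y + 2 * (c ⬝ᵥ y) + c ⬝ᵥ c := expand_dot_add y c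
  have e4 : f y₀ = y₀ ⬝ᵥ y₀ + 2 * (c ⬝ᵥ y₀) + c ⬝ᵥ c := expand_dot_add y₀ c
  have e5 : β * q y₀ = β := by rw [hq0]; ring
  have e6 : 0 ≤ (y - y₀) ⬝ᵥ (β • P - 1).mulVec (y - y₀) := hM (y - y₀)
  show f y ≤ 1 + β * (q y - 1)
  rw [mul_sub, mul_one]
  linarith

lemma quadform {n : ℕ} (P : Matrix (Fin n) (Fin n) ℝ) (c : Fin n → ℝ) (β : ℝ)
    (x : Fin n → ℝ) (t : ℝ) :
    (Sum.elim x (fun _ => t)) ⬝ᵥ (Fmat P c β).mulVec (Sum.elim x (fun _ => t)) =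
      x ⬝ᵥ (β • P - 1).mulVec x - 2 * β * t * (x ⬝ᵥ P.mulVec c)
        + t^2 * (β * (c ⬝ᵥ P.mulVec c - 1) + 1) := by
  rw [Fmat, fromBlocks_mulVec, sumElim_dotProduct_sumElim, dotProduct_add, dotProduct_add]
  simp only [Sum.elim_comp_inl, Sum.elim_comp_inr]
  have hB : (x ⬝ᵥ (Matrix.of fun i (_ : Fin 1) => -β * P.mulVec c i).mulVec (fun _ => t))
      = -(β * t) * (x ⬝ᵥ P.mulVec c) := by
    simp only [mulVec, dotProduct, of_apply, Fin.sum_univ_one, neg_mul, Finset.mul_sum,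
      Finset.sum_mul, mul_neg, Finset.sum_neg_distrib]
    rw [neg_inj]
    apply Finset.sum_congr rfl
    intros i _
    apply Finset.sum_congr rfl
    intros; ring
  have hC : ((fun _ : Fin 1 => t) ⬝ᵥ (Matrix.of fun (_ : Fin 1) j => -β * P.mulVec c j).mulVec x)
      = -(β * t) * (x ⬝ᵥ P.mulVec c) := by
    simp only [mulVec, dotProduct, of_apply, Fin.sum_univ_one, neg_mul, Finset.mul_sum,
      Finset.sum_mul, mul_neg, Finset.sum_neg_distrib]
    rw [neg_inj]
    apply Finset.sum_congr rfl
    intros i _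
    apply Finset.sum_congr rfl
    intros; ring
  have hD : ((fun _ : Fin 1 => t) ⬝ᵥ
      (Matrix.of fun (_ : Fin 1) (_ : Fin 1) => β * (c ⬝ᵥ P.mulVec c - 1) + 1).mulVec (fun _ => t))
      = t^2 * (β * (c ⬝ᵥ P.mulVec c - 1) + 1) := by
    simp only [mulVec, dotProduct, of_apply, Fin.sum_univ_one]
    ring
  rw [hB, hC, hD]
  ring

lemma key_identity {n : ℕ} {P : Matrix (Fin n) (Fin n) ℝ} (hPt : Pᵀ = P) (c : Fin n → ℝ)
    (β : ℝ) (x : Fin n → ℝ) (t : ℝ) :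
    x ⬝ᵥ (β • P - 1).mulVec x - 2 * β * t * (x ⬝ᵥ P.mulVec c)
        + t^2 * (β * (c ⬝ᵥ P.mulVec c - 1) + 1)
      = β * ((x - t • c) ⬝ᵥ P.mulVec (x - t • c)) - x ⬝ᵥ x + t^2 * (1 - β) := by
  have e1 : x ⬝ᵥ (β • P - 1).mulVec x = β * (x ⬝ᵥ P.mulVec x) - x ⬝ᵥ x := Mform P β x
  have hsym : c ⬝ᵥ P.mulVec x = x ⬝ᵥ P.mulVec c := dot_symm P hPt c x
  have e2 : (x - t • c) ⬝ᵥ P.mulVec (x - t • c)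
      = x ⬝ᵥ P.mulVec x - 2 * t * (x ⬝ᵥ P.mulVec c) + t^2 * (c ⬝ᵥ P.mulVec c) := by
    simp only [mulVec_sub, dotProduct_sub, sub_dotProduct, mulVec_smul, dotProduct_smul,
      smul_dotProduct, smul_eq_mul]
    rw [hsym]
    ring
  rw [e1, e2]
  ring

lemma fmat_herm {n : ℕ} {P : Matrix (Fin n) (Fin n) ℝ} (hPt : Pᵀ = P) (c : Fin n → ℝ) (β : ℝ) :
    (Fmat P c β).IsHermitian := by
  have hA : (β • P - 1)ᵀ = β • P - 1 := by
    rw [transpose_sub, transpose_smul, transpose_one, hPt]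
  rw [Matrix.IsHermitian, conjTranspose_eq_transpose_of_trivial, Fmat, fromBlocks_transpose, hA]
  congr 1

end Stmt14Aux

set_option maxHeartbeats 1000000 in
open Stmt14Aux in
theorem stmt_14 {n : ℕ} (P : Matrix (Fin n) (Fin n) ℝ) (c : Fin n → ℝ) (hP : P.PosDef) :
    Ellipsoid c P ⊆ UnitBall n ↔ ∃ β : ℝ, 0 ≤ β ∧ (Fmat P c β).PosSemidef := by
  have hPt : Pᵀ = P := by
    rw [← conjTranspose_eq_transpose_of_trivial P]
    exact hP.1
  constructor
  · intro hsub
    have hsub' : ∀ y : Fin n → ℝ, y ⬝ᵥ P.mulVec y ≤ 1 → (y + c) ⬝ᵥ (y + c) ≤ 1 := by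
      intro y hy
      have hmem : (y + c) ∈ Ellipsoid c P := by
        show ((y + c) - c) ⬝ᵥ P.mulVec ((y + c) - c) ≤ 1
        rw [add_sub_cancel_right]
        exact hy
      exact hsub hmem
    obtain ⟨β, hβ0, hM, hkey⟩ := forward_core hP c hsub'
    refine ⟨β, hβ0, PosSemidef.of_dotProduct_mulVec_nonneg (fmat_herm hPt c β) ?_⟩
    intro z
    rw [star_trivial]
    have hz : z = Sum.elim (z ∘ Sum.inl) (fun _ => z (Sum.inr 0)) := by
      funext i
      cases i with
      | inl i => rfl
      | inr i =>
        have : i = 0 := Subsingleton.elim _ _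
        rw [this]
        rfl
    rw [hz, quadform, key_identity hPt]
    set x : Fin n → ℝ := z ∘ Sum.inl with hx
    set t : ℝ := z (Sum.inr 0) with htdef
    rcases eq_or_ne t 0 with ht0 | ht0
    · rw [ht0]
      simp only [zero_smul, sub_zero]
      have h1 := hM x
      rw [Mform] at h1
      nlinarith
    · set y : Fin n → ℝ := t⁻¹ • x - c with hy
      have hxy : x - t • c = t • y := by
        rw [hy, smul_sub, smul_smul, mul_inv_cancel₀ ht0, one_smul]
      have hxy2 : x = t • (y + c) := by
        rw [smul_add, ← hxy]
        abel
      rw [hxy, smul_quad]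
      have hx2 : x ⬝ᵥ x = t^2 * ((y + c) ⬝ᵥ (y + c)) := by
        rw [hxy2, smul_dot]
      rw [hx2]
      have hk := hkey y
      nlinarith [mul_nonneg (sq_nonneg t)
        (show (0:ℝ) ≤ 1 + β * (y ⬝ᵥ P.mulVec y - 1) - (y + c) ⬝ᵥ (y + c) by linarith)]
  · rintro ⟨β, hβ0, hpsd⟩ x hx
    have hq : (x - c) ⬝ᵥ P.mulVec (x - c) ≤ 1 := hx
    have h2 := hpsd.dotProduct_mulVec_nonneg (Sum.elim x (fun _ => 1))
    rw [star_trivial, quadform, key_identity hPt] at h2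
    simp only [one_smul, one_pow] at h2
    show x ⬝ᵥ x ≤ 1
    nlinarith [mul_nonneg hβ0 (sub_nonneg.mpr hq)]
end
end

section
/- Let P ∈ ℝ^{n×n} be symmetric positive definite with smallest eigenvalue λ_min(P), and let c ∈ ℝⁿ. If 1 − cᵀc < 1/λ_min(P), then E(c,P) is not contained in B(0,1). Equivalently, E(c,P) ⊆ B(0,1) implies cᵀc + 1/λ_min(P) ≤ 1. -/
open Matrix

noncomputable section

theorem stmt_16 {n : ℕ} (P : Matrix (Fin n) (Fin n) ℝ) (c : Fin n → ℝ) (hP : P.PosDef)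
    (lammin : ℝ)
    (hev : ∃ v : Fin n → ℝ, v ≠ 0 ∧ P.mulVec v = lammin • v)
    (hle : ∀ (μ : ℝ) (v : Fin n → ℝ), v ≠ 0 → P.mulVec v = μ • v → lammin ≤ μ)
    (h : Ellipsoid c P ⊆ UnitBall n) :
    c ⬝ᵥ c + 1 / lammin ≤ 1 := by
  obtain ⟨v, hv, hPv⟩ := hev
  have hs : 0 < v ⬝ᵥ v := by
    have h0 : v ⬝ᵥ v ≠ 0 := fun hh => hv (dotProduct_self_eq_zero.mp hh)
    have hnn : 0 ≤ v ⬝ᵥ v := Finset.sum_nonneg fun i _ => mul_self_nonneg _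
    exact hnn.lt_of_ne (Ne.symm h0)
  have hpos : 0 < v ⬝ᵥ P.mulVec v := by
    have := hP.dotProduct_mulVec_pos hv
    simpa using this
  have hlam : 0 < lammin := by
    have : v ⬝ᵥ P.mulVec v = lammin * (v ⬝ᵥ v) := by
      rw [hPv, dotProduct_smul]; ring_nf
    nlinarith
  set s := v ⬝ᵥ v with hsdef
  set t := Real.sqrt (lammin * s) with htdef
  have ht : 0 < t := Real.sqrt_pos.mpr (by positivity)
  set w := t⁻¹ • v with hwdef
  have hww : w ⬝ᵥ w = 1 / lammin := by
    rw [hwdef, smul_dotProduct, dotProduct_smul, smul_eq_mul, smul_eq_mul, ← hsdef]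
    rw [htdef]
    rw [← Real.sqrt_inv]
    have : Real.sqrt (lammin * s)⁻¹ * (Real.sqrt (lammin * s)⁻¹ * s) =
        (lammin * s)⁻¹ * s := by
      rw [← mul_assoc, Real.mul_self_sqrt (by positivity)]
    rw [this]
    field_simp
  have hPw : P.mulVec w = lammin • w := by
    rw [hwdef, mulVec_smul, hPv, smul_comm]
  have hwPw : w ⬝ᵥ P.mulVec w = 1 := by
    rw [hPw, dotProduct_smul, smul_eq_mul, hww]
    field_simp
  have mem1 : c + w ∈ Ellipsoid c P := by
    simp only [Ellipsoid, Set.mem_setOf_eq, add_sub_cancel_left]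
    exact le_of_eq hwPw
  have mem2 : c - w ∈ Ellipsoid c P := by
    simp only [Ellipsoid, Set.mem_setOf_eq, sub_sub_cancel_left]
    rw [neg_dotProduct, mulVec_neg, dotProduct_neg, neg_neg]
    exact le_of_eq hwPw
  have h1 : (c + w) ⬝ᵥ (c + w) ≤ 1 := h mem1
  have h2 : (c - w) ⬝ᵥ (c - w) ≤ 1 := h mem2
  have e1 : (c + w) ⬝ᵥ (c + w) = c ⬝ᵥ c + 2 * (c ⬝ᵥ w) + w ⬝ᵥ w := by
    rw [add_dotProduct, dotProduct_add, dotProduct_add, dotProduct_comm w c]; ring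
  have e2 : (c - w) ⬝ᵥ (c - w) = c ⬝ᵥ c - 2 * (c ⬝ᵥ w) + w ⬝ᵥ w := by
    rw [sub_dotProduct, dotProduct_sub, dotProduct_sub, dotProduct_comm w c]; ring
  rw [← hww]
  nlinarith [h1, h2, e1, e2]
end
end
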